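/- arXiv:1908.10292 — 2 statements merged into one kernel-verified Lean document; each statement's English description precedes it below -/
import Mathlib

section
/- For every t ∈ [−1,1], the function U(t) := 3t(π − arccos t) + √(1 − t²) admits the convergent power-series representation U(t) = 1 + (3π/2) t + Σ_{i=0}^{∞} [ (4i+5)(1/2)_i / ( 2(2i+1)(i+1) i! ) ] t^{2i+2}, where (1/2)_i = (1/2)(3/2)⋯(1/2 + i − 1) is the Pochhammer symbol (with (1/2)_0 = 1). In particular, all coefficients of this power series are nonnegative. -/
open Real Set

noncomputable section
namespace St10


/-- `A i = (1/2)_i / i!` -/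
def A (i : ℕ) : ℝ := (ascPochhammer ℝ i).eval (1/2 : ℝ) / i.factorial

/-- `B i = (3/2)_i / i!` -/
def B (i : ℕ) : ℝ := (ascPochhammer ℝ i).eval (3/2 : ℝ) / i.factorial

/-- the coefficients -/
def c (i : ℕ) : ℝ :=
  (4 * (i : ℝ) + 5) * (ascPochhammer ℝ i).eval (1 / 2 : ℝ) /
    (2 * (2 * (i : ℝ) + 1) * ((i : ℝ) + 1) * (Nat.factorial i))

lemma A_zero : A 0 = 1 := by simp [A]

lemma B_zero : B 0 = 1 := by simp [B]

lemma A_pos (i : ℕ) : 0 < A i :=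
  div_pos (ascPochhammer_pos i (1/2 : ℝ) (by norm_num))
    (by exact_mod_cast Nat.cast_pos.2 i.factorial_pos)

lemma B_pos (i : ℕ) : 0 < B i :=
  div_pos (ascPochhammer_pos i (3/2 : ℝ) (by norm_num))
    (by exact_mod_cast Nat.cast_pos.2 i.factorial_pos)

lemma A_succ (i : ℕ) : A (i + 1) * ((i : ℝ) + 1) = A i * ((i : ℝ) + 1/2) := by
  have hfac : (Nat.factorial (i+1) : ℝ) = ((i : ℝ) + 1) * i.factorial := by
    rw [Nat.factorial_succ]; push_cast; ring
  have hfp : (0:ℝ) < i.factorial := Nat.cast_pos.2 i.factorial_pos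
  simp only [A, ascPochhammer_succ_right, Polynomial.eval_mul, Polynomial.eval_add,
    Polynomial.eval_X, Polynomial.eval_natCast, hfac]
  field_simp
  ring

lemma B_succ (i : ℕ) : B (i + 1) * ((i : ℝ) + 1) = B i * ((i : ℝ) + 3/2) := by
  have hfac : (Nat.factorial (i+1) : ℝ) = ((i : ℝ) + 1) * i.factorial := by
    rw [Nat.factorial_succ]; push_cast; ring
  have hfp : (0:ℝ) < i.factorial := Nat.cast_pos.2 i.factorial_pos
  simp only [B, ascPochhammer_succ_right, Polynomial.eval_mul, Polynomial.eval_add,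
    Polynomial.eval_X, Polynomial.eval_natCast, hfac]
  field_simp
  ring

lemma B_eq (i : ℕ) : B i = (2 * (i:ℝ) + 1) * A i := by
  induction i with
  | zero => simp [A_zero, B_zero]
  | succ n ih =>
    have hA := A_succ n
    have hB := B_succ n
    have h1 : ((n:ℝ) + 1) ≠ 0 := by positivity
    have : B (n+1) * ((n:ℝ)+1) = (2*((n:ℝ)+1)+1) * A (n+1) * ((n:ℝ)+1) := by
      rw [hB, ih]
      have : (2*((n:ℝ)+1)+1) * A (n+1) * ((n:ℝ)+1) = (2*((n:ℝ)+1)+1) * (A (n+1) * ((n:ℝ)+1)) := by ring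
      rw [this, hA]; ring
    have := mul_right_cancel₀ h1 this
    push_cast
    linarith [this]

lemma A_le_one (i : ℕ) : A i ≤ 1 := by
  induction i with
  | zero => simp [A_zero]
  | succ n ih =>
    have hA := A_succ n
    have h1 : (0:ℝ) < (n:ℝ) + 1 := by positivity
    have hAn := (A_pos n).le
    nlinarith [A_pos (n+1)]

lemma A_sq (i : ℕ) : A i ^ 2 * ((i:ℝ) + 1) ≤ 1 := by
  induction i with
  | zero => simp [A_zero]
  | succ n ih =>
    have hA := A_succ n
    have h1 : (0:ℝ) < (n:ℝ) + 1 := by positivity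
    have hAn := (A_pos n).le
    have hAn1 := (A_pos (n+1)).le
    have key : A (n+1) = A n * ((n:ℝ) + 1/2) / ((n:ℝ)+1) := by
      field_simp at hA ⊢; linarith
    rw [key]
    rw [div_pow]
    rw [div_mul_eq_mul_div, div_le_one (by positivity)]
    push_cast
    nlinarith [sq_nonneg (A n), ih]

lemma A_le_inv_sqrt (i : ℕ) : A i ≤ (Real.sqrt ((i:ℝ)+1))⁻¹ := by
  have h1 : (0:ℝ) < (i:ℝ) + 1 := by positivity
  have hs : 0 < Real.sqrt ((i:ℝ)+1) := Real.sqrt_pos.2 h1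
  have hsq : (A i * Real.sqrt ((i:ℝ)+1)) ^ 2 ≤ 1 := by
    rw [mul_pow, Real.sq_sqrt h1.le]; exact A_sq i
  have hx : 0 ≤ A i * Real.sqrt ((i:ℝ)+1) := mul_nonneg (A_pos i).le hs.le
  have : A i * Real.sqrt ((i:ℝ)+1) ≤ 1 := by nlinarith
  rw [inv_eq_one_div, le_div_iff₀ hs]
  exact this



lemma c_eq (i : ℕ) : c i = (4 * (i:ℝ) + 5) * A i / (2 * (2*(i:ℝ)+1) * ((i:ℝ)+1)) := by
  have hfp : (0:ℝ) < i.factorial := Nat.cast_pos.2 i.factorial_pos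
  have h1 : (0:ℝ) < 2*(i:ℝ)+1 := by positivity
  have h2 : (0:ℝ) < (i:ℝ)+1 := by positivity
  rw [c, A]
  field_simp

lemma c_nonneg (i : ℕ) : 0 ≤ c i := by
  rw [c_eq]
  have := (A_pos i).le
  positivity

lemma c_le (i : ℕ) : c i ≤ 3 * (((i:ℝ)+1) * Real.sqrt ((i:ℝ)+1))⁻¹ := by
  have h1 : (0:ℝ) < 2*(i:ℝ)+1 := by positivity
  have h2 : (0:ℝ) < (i:ℝ)+1 := by positivity
  have hs : (0:ℝ) < Real.sqrt ((i:ℝ)+1) := Real.sqrt_pos.2 h2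
  have hA := A_le_inv_sqrt i
  have hA0 := (A_pos i).le
  have hA0 := (A_pos i).le
  rw [c_eq, div_le_iff₀ (by positivity)]
  have hrw : 3 * (((i:ℝ)+1) * Real.sqrt ((i:ℝ)+1))⁻¹ * (2 * (2*(i:ℝ)+1) * ((i:ℝ)+1)) =
      (6 * (2*(i:ℝ)+1)) * (Real.sqrt ((i:ℝ)+1))⁻¹ := by
    field_simp
    ring
  rw [hrw]
  have hi : (0:ℝ) ≤ 4*(i:ℝ)+5 := by positivity
  have h5 := mul_le_mul_of_nonneg_left hA hi
  have h6 : (0:ℝ) ≤ (Real.sqrt ((i:ℝ)+1))⁻¹ := by positivity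
  nlinarith

lemma summable_bound : Summable (fun i : ℕ => 3 * (((i:ℝ)+1) * Real.sqrt ((i:ℝ)+1))⁻¹) := by
  have base : Summable (fun n : ℕ => ((n:ℝ) ^ (3/2 : ℝ))⁻¹) :=
    Real.summable_nat_rpow_inv.2 (by norm_num)
  have shifted := (summable_nat_add_iff 1).2 base
  apply (shifted.mul_left 3).congr
  intro n
  have h2 : (0:ℝ) < (n:ℝ)+1 := by positivity
  have hc : ((n+1 : ℕ):ℝ) = (n:ℝ)+1 := by push_cast; ring
  rw [hc]
  have hpow : ((n:ℝ)+1) ^ ((3:ℝ)/2) = ((n:ℝ)+1) * Real.sqrt ((n:ℝ)+1) := by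
    rw [show ((3:ℝ)/2) = 1 + 1/2 by norm_num, Real.rpow_add h2, Real.rpow_one,
      Real.sqrt_eq_rpow]
  rw [hpow]

lemma summable_c : Summable c :=
  Summable.of_nonneg_of_le c_nonneg c_le summable_bound

lemma key_coeff (i : ℕ) :
    c i * ((2*(i:ℝ)+2) * (2*(i:ℝ)+1)) =
      5 * B i - (if i = 0 then 0 else 3 * B (i-1)) := by
  cases i with
  | zero =>
    simp [c_eq, A_zero, B_eq]
  | succ n =>
    simp only [Nat.succ_ne_zero, if_false, Nat.succ_sub_one]
    rw [c_eq, B_eq, B_eq]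
    have hA := A_succ n
    have h2 : (0:ℝ) < (n:ℝ)+1 := by positivity
    have h3 : (0:ℝ) < 2*(n:ℝ)+3 := by positivity
    push_cast
    have hAi : A n = A (n+1) * ((n:ℝ)+1) / ((n:ℝ)+1/2) := by
      field_simp at hA ⊢; linarith
    rw [hAi]
    push_cast
    field_simp
    ring


lemma B_le (i : ℕ) : B i ≤ 2*(i:ℝ)+1 := by
  rw [B_eq]
  nlinarith [A_le_one i, A_pos i]


lemma summable_aux {K r : ℝ} (hr : |r| < 1) :
    Summable (fun n : ℕ => 8 * K * (((n:ℝ)+1)^2 * r^n)) := by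
  have hr' : ‖r‖ < 1 := by rwa [Real.norm_eq_abs]
  have h2 := summable_pow_mul_geometric_of_norm_lt_one (R := ℝ) 2 hr'
  have h1 := summable_pow_mul_geometric_of_norm_lt_one (R := ℝ) 1 hr'
  have h0 := summable_geometric_of_norm_lt_one hr'
  apply (((h2.add (h1.mul_left 2)).add h0).mul_left (8*K)).congr
  intro n; push_cast; ring

lemma summable_pow_series {b : ℕ → ℝ} {K : ℝ} (hb : ∀ n, |b n| ≤ K * ((n:ℝ)+1))
    {m k : ℕ} (hm : 1 ≤ m) {x : ℝ} (hx : |x| < 1) :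
    Summable (fun n => b n * x ^ (m*n+k)) := by
  have hK : 0 ≤ K := by
    have := (abs_nonneg (b 0)).trans (hb 0); simpa using this
  apply Summable.of_norm_bounded (g := fun n : ℕ => (K * ((n:ℝ)+1)) * |x|^n)
  · have hx' : ‖x‖ < 1 := by rwa [Real.norm_eq_abs]
    have habs : ‖(|x|)‖ < 1 := by rwa [Real.norm_eq_abs, abs_abs]
    have h1 := summable_pow_mul_geometric_of_norm_lt_one (R := ℝ) 1 habs
    have h0 := summable_geometric_of_norm_lt_one habs
    apply ((h1.add h0).mul_left K).congr
    intro n; push_cast; ring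
  · intro n
    rw [Real.norm_eq_abs, abs_mul, abs_pow]
    apply mul_le_mul (hb n) ?_ (by positivity) (by positivity)
    exact pow_le_pow_of_le_one (abs_nonneg x) hx.le (by nlinarith)

lemma deriv_norm_bound {b : ℕ → ℝ} {K : ℝ} (hb : ∀ n, |b n| ≤ K * ((n:ℝ)+1))
    {m k : ℕ} (hm : 1 ≤ m) (hm2 : m ≤ 2) (hk : k ≤ 2) {r y : ℝ}
    (hrhalf : 1/2 ≤ r) (hr1 : r < 1) (hyr : |y| ≤ r) (n : ℕ) :
    ‖b n * (((m*n+k : ℕ):ℝ) * y ^ (m*n+k-1))‖ ≤ 8 * (K*2) * (((n:ℝ)+1)^2 * r^n) := by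
  have hK : 0 ≤ K := by
    have := (abs_nonneg (b 0)).trans (hb 0); simpa using this
  have hrpos : 0 < r := lt_of_lt_of_le (by norm_num) hrhalf
  have hcast : ((m*n+k : ℕ):ℝ) ≤ 2*(n:ℝ)+2 := by
    have : m*n+k ≤ 2*n+2 := by nlinarith
    calc ((m*n+k : ℕ):ℝ) ≤ ((2*n+2 : ℕ):ℝ) := by exact_mod_cast this
      _ = 2*(n:ℝ)+2 := by push_cast; ring
  have h1 : |y|^(m*n+k-1) ≤ r^(m*n+k-1) := pow_le_pow_left₀ (abs_nonneg y) hyr _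
  have h2 : r^(m*n+k-1) ≤ r^(n-1) :=
    pow_le_pow_of_le_one hrpos.le hr1.le
      (by have h := Nat.le_mul_of_pos_left n hm; omega)
  have h3 : r^(n-1) ≤ 2 * r^n := by
    cases n with
    | zero => simpa using one_le_two
    | succ p =>
      simp only [Nat.succ_sub_one, pow_succ]
      nlinarith [pow_nonneg hrpos.le p]
  have hrn : (0:ℝ) ≤ r^n := pow_nonneg hrpos.le n
  rw [Real.norm_eq_abs, abs_mul, abs_mul, abs_pow, Nat.abs_cast]
  calc |b n| * (((m*n+k : ℕ):ℝ) * |y|^(m*n+k-1))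
      ≤ (K * ((n:ℝ)+1)) * ((2*(n:ℝ)+2) * (2 * r^n)) := by
        apply mul_le_mul (hb n) ?_ (by positivity) (by positivity)
        apply mul_le_mul hcast ((h1.trans h2).trans h3) (by positivity) (by positivity)
    _ = 4 * (K * (((n:ℝ)+1)^2 * r^n)) := by ring
    _ ≤ 8 * (K*2) * (((n:ℝ)+1)^2 * r^n) := by
        have hXpos : 0 ≤ K * (((n:ℝ)+1)^2 * r^n) := by positivity
        nlinarith

lemma summable_deriv_pow {b : ℕ → ℝ} {K : ℝ} (hb : ∀ n, |b n| ≤ K * ((n:ℝ)+1))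
    {m k : ℕ} (hm : 1 ≤ m) (hm2 : m ≤ 2) (hk : k ≤ 2) {x : ℝ} (hx : |x| < 1) :
    Summable (fun n => b n * (((m*n+k : ℕ):ℝ) * x ^ (m*n+k-1))) := by
  set r : ℝ := (|x| + 1) / 2 with hr
  have hr0 : 0 ≤ |x| := abs_nonneg x
  have hrx : |x| ≤ r := by rw [hr]; linarith
  have hr1 : r < 1 := by rw [hr]; linarith
  have hrhalf : 1/2 ≤ r := by rw [hr]; linarith
  have hrpos : 0 < r := lt_of_lt_of_le (by norm_num) hrhalf
  have hrabs : |r| < 1 := by rwa [abs_of_pos hrpos]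
  exact Summable.of_norm_bounded (summable_aux hrabs)
    (deriv_norm_bound hb hm hm2 hk hrhalf hr1 hrx)

lemma hasDerivAt_tsum_pow {b : ℕ → ℝ} {K : ℝ} (hb : ∀ n, |b n| ≤ K * ((n:ℝ)+1))
    {m k : ℕ} (hm : 1 ≤ m) (hm2 : m ≤ 2) (hk : k ≤ 2) {x : ℝ} (hx : |x| < 1) :
    HasDerivAt (fun y => ∑' n, b n * y ^ (m*n+k))
      (∑' n, b n * (((m*n+k : ℕ):ℝ) * x ^ (m*n+k-1))) x := by
  set r : ℝ := (|x| + 1) / 2 with hr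
  have hr0 : 0 ≤ |x| := abs_nonneg x
  have hrx : |x| < r := by rw [hr]; linarith
  have hr1 : r < 1 := by rw [hr]; linarith
  have hrhalf : 1/2 ≤ r := by rw [hr]; linarith
  have hrpos : 0 < r := lt_of_lt_of_le (by norm_num) hrhalf
  have hrabs : |r| < 1 := by rwa [abs_of_pos hrpos]
  apply hasDerivAt_tsum_of_isPreconnected
    (u := fun n : ℕ => 8 * (K*2) * (((n:ℝ)+1)^2 * r^n))
    (summable_aux hrabs) isOpen_Ioo (convex_Ioo (-r) r).isPreconnected
    (g := fun n y => b n * y ^ (m*n+k))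
    (g' := fun n y => b n * (((m*n+k : ℕ):ℝ) * y ^ (m*n+k-1)))
    (fun n y _ => (hasDerivAt_pow (m*n+k) y).const_mul (b n))
    ?_ (abs_lt.1 hrx) (summable_pow_series hb hm hx) (abs_lt.1 hrx)
  intro n y hy
  have hyr : |y| ≤ r := le_of_lt (abs_lt.2 ⟨hy.1, hy.2⟩)
  exact deriv_norm_bound hb hm hm2 hk hrhalf hr1 hyr n


lemma hB_abs : ∀ n : ℕ, |B n| ≤ 2 * ((n:ℝ)+1) := by
  intro n
  rw [abs_of_pos (B_pos n)]
  have := B_le n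
  linarith

/-- sum of the `(3/2)` binomial-type series -/
def S (u : ℝ) : ℝ := ∑' i, B i * u ^ i
/-- its termwise derivative sum -/
def Sd (u : ℝ) : ℝ := ∑' i, B i * ((i:ℝ) * u ^ (i-1))

lemma hasSum_S {x : ℝ} (hx : |x| < 1) : HasSum (fun i => B i * x ^ i) (S x) := by
  have h := (summable_pow_series hB_abs (m := 1) (k := 0) le_rfl hx).congr
    (g := fun i => B i * x ^ i) (fun i => by simp)
  have e : S x = ∑' i, B i * x ^ i := rfl
  exact h.hasSum

lemma hasSum_Sd {x : ℝ} (hx : |x| < 1) :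
    HasSum (fun i => B i * ((i:ℝ) * x ^ (i-1))) (Sd x) := by
  have h := (summable_deriv_pow hB_abs (m := 1) (k := 0) le_rfl one_le_two (by norm_num) hx).congr
    (g := fun i => B i * ((i:ℝ) * x ^ (i-1))) (fun i => by simp)
  exact h.hasSum

lemma hasDerivAt_S {x : ℝ} (hx : |x| < 1) : HasDerivAt S (Sd x) x := by
  have h := hasDerivAt_tsum_pow hB_abs (m := 1) (k := 0) le_rfl one_le_two (by norm_num) hx
  simp only [one_mul, add_zero, Nat.cast_id] at h
  exact h

lemma S_ode {x : ℝ} (hx : |x| < 1) : (1 - x) * Sd x = 3/2 * S x := by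
  have hS' := hasSum_Sd hx
  have h3 := hasSum_S hx
  have h1 : HasSum (fun i : ℕ => (i:ℝ) * B i * x ^ i) (x * Sd x) := by
    have e : (fun i : ℕ => x * (B i * ((i:ℝ) * x ^ (i-1)))) =
        (fun i : ℕ => (i:ℝ) * B i * x ^ i) := by
      funext i
      cases i with
      | zero => simp
      | succ p => simp only [Nat.succ_sub_one, pow_succ]; push_cast; ring
    exact e ▸ (hS'.mul_left x)
  have h2 : HasSum (fun i : ℕ => ((i:ℝ)+1) * B (i+1) * x ^ i) (Sd x) := by
    have h := (hasSum_nat_add_iff' (f := fun i : ℕ => B i * ((i:ℝ) * x ^ (i-1))) 1).2 hS'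
    simp only [Finset.range_one, Finset.sum_singleton, Nat.cast_zero, zero_mul, mul_zero,
      sub_zero] at h
    have e : (fun n : ℕ => B (n+1) * (((n+1 : ℕ):ℝ) * x ^ (n+1-1))) =
        (fun i : ℕ => ((i:ℝ)+1) * B (i+1) * x ^ i) := by
      funext n; simp only [Nat.succ_sub_one]; push_cast; ring
    exact e ▸ h
  have hcomb := (h2.sub h1).sub (h3.mul_left (3/2))
  have e0 : (fun i : ℕ => (((i:ℝ)+1) * B (i+1) * x ^ i - (i:ℝ) * B i * x ^ i) -
      3/2 * (B i * x ^ i)) = (fun _ : ℕ => (0:ℝ)) := by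
    funext i
    linear_combination x ^ i * B_succ i
  rw [e0] at hcomb
  have := hcomb.unique hasSum_zero
  linarith [this]

lemma const_of_deriv {h : ℝ → ℝ} (hd : ∀ x ∈ Ioo (-1:ℝ) 1, HasDerivAt h 0 x) :
    ∀ u ∈ Ioo (-1:ℝ) 1, h u = h 0 := by
  intro u hu
  rcases le_total 0 u with h0 | h0
  · have key := constant_of_has_deriv_right_zero (f := h) (a := 0) (b := u)
      (fun x hx => ((hd x ⟨by linarith [hx.1], lt_of_le_of_lt hx.2 hu.2⟩).continuousAt).continuousWithinAt)
      (fun x hx => (hd x ⟨by linarith [hx.1], lt_trans hx.2 hu.2⟩).hasDerivWithinAt)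
    exact key u ⟨h0, le_refl u⟩
  · have key := constant_of_has_deriv_right_zero (f := h) (a := u) (b := 0)
      (fun x hx => ((hd x ⟨lt_of_lt_of_le hu.1 hx.1, by linarith [hx.2]⟩).continuousAt).continuousWithinAt)
      (fun x hx => (hd x ⟨lt_of_lt_of_le hu.1 hx.1, by linarith [hx.2]⟩).hasDerivWithinAt)
    exact (key 0 ⟨h0, le_refl 0⟩).symm

lemma S_zero : S 0 = 1 := by
  rw [S, tsum_eq_single 0 (fun n hn => by simp [zero_pow hn])]
  simp [B_zero]

lemma S_eq {u : ℝ} (hu : u ∈ Ioo (-1:ℝ) 1) :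
    (1 - u) * Real.sqrt (1 - u) * S u = 1 := by
  have key : ∀ x ∈ Ioo (-1:ℝ) 1,
      HasDerivAt (fun y => (1 - y) * Real.sqrt (1 - y) * S y) 0 x := by
    intro x hx
    have hx1 : (0:ℝ) < 1 - x := by linarith [hx.2]
    have habs : |x| < 1 := abs_lt.2 ⟨hx.1, hx.2⟩
    have hs : 0 < Real.sqrt (1 - x) := Real.sqrt_pos.2 hx1
    have hs2 : Real.sqrt (1 - x) ^ 2 = 1 - x := Real.sq_sqrt hx1.le
    have d1 : HasDerivAt (fun y : ℝ => 1 - y) (-1) x := by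
      simpa using (hasDerivAt_id x).const_sub 1
    have dsq : HasDerivAt (fun y : ℝ => Real.sqrt (1 - y))
        (-1 / (2 * Real.sqrt (1 - x))) x := d1.sqrt (ne_of_gt hx1)
    have dS := hasDerivAt_S habs
    have dprod := (d1.mul dsq).mul dS
    have hode := S_ode habs
    have e1 : (1 - x) * (-1 / (2 * Real.sqrt (1 - x))) = -(Real.sqrt (1 - x)/2) := by
      field_simp; nlinarith [hs2]
    refine dprod.congr_deriv ?_
    rw [e1]
    simp only [Pi.mul_apply]
    linear_combination (Real.sqrt (1-x)) * hode
  have := const_of_deriv key u hu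
  rw [this]
  simp [S_zero]



lemma c_le_three (i : ℕ) : c i ≤ 3 := by
  have h := c_le i
  have h1 : (1:ℝ) ≤ ((i:ℝ)+1) * Real.sqrt ((i:ℝ)+1) := by
    have h2 : (1:ℝ) ≤ (i:ℝ)+1 := by
      have := Nat.cast_nonneg (α := ℝ) i; linarith
    have h3 : (1:ℝ) ≤ Real.sqrt ((i:ℝ)+1) := by
      nlinarith [Real.sq_sqrt (show (0:ℝ) ≤ (i:ℝ)+1 by positivity),
        Real.sqrt_nonneg ((i:ℝ)+1)]
    nlinarith
  have h4 : (((i:ℝ)+1) * Real.sqrt ((i:ℝ)+1))⁻¹ ≤ 1 := by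
    rw [inv_le_one_iff₀]; right; exact h1
  nlinarith [c_nonneg i]

lemma hc_abs (n : ℕ) : |c n| ≤ 3 * ((n:ℝ)+1) := by
  rw [abs_of_nonneg (c_nonneg n)]
  have h1 : (1:ℝ) ≤ (n:ℝ)+1 := by
    have := Nat.cast_nonneg (α := ℝ) n; linarith
  nlinarith [c_le_three n]

def F (t : ℝ) : ℝ := ∑' i, c i * t ^ (2*i+2)
def F1 (t : ℝ) : ℝ := ∑' i, c i * (((2*i+2 : ℕ):ℝ) * t ^ (2*i+2-1))

lemma hasDerivAt_F {x : ℝ} (hx : |x| < 1) : HasDerivAt F (F1 x) x :=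
  hasDerivAt_tsum_pow hc_abs (m := 2) (k := 2) one_le_two le_rfl le_rfl hx

lemma hb' (n : ℕ) : |c n * ((2*n+2 : ℕ):ℝ)| ≤ 9 * ((n:ℝ)+1) := by
  rw [abs_mul, Nat.abs_cast]
  have h1 : ((2*n+2 : ℕ):ℝ) ≤ 3 * ((n:ℝ)+1) := by push_cast; linarith
  have h2 := hc_abs n
  have h0 : (0:ℝ) ≤ ((2*n+2 : ℕ):ℝ) := by positivity
  have h3 : (0:ℝ) ≤ (n:ℝ)+1 := by positivity
  calc |c n| * ((2*n+2 : ℕ):ℝ) ≤ 3 * ((2*n+2 : ℕ):ℝ) := by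
        apply mul_le_mul_of_nonneg_right _ h0
        rw [abs_of_nonneg (c_nonneg n)]; exact c_le_three n
    _ ≤ 9 * ((n:ℝ)+1) := by push_cast; linarith [Nat.cast_nonneg (α := ℝ) n]

lemma F1_eq_tsum (t : ℝ) : F1 t = ∑' n, (c n * ((2*n+2 : ℕ):ℝ)) * t ^ (2*n+1) := by
  rw [F1]
  apply tsum_congr
  intro n
  have he : 2*n+2-1 = 2*n+1 := by omega
  rw [he, mul_assoc]

lemma hasDerivAt_F1 {x : ℝ} (hx : |x| < 1) :
    HasDerivAt F1
      (∑' n, (c n * ((2*n+2 : ℕ):ℝ)) * (((2*n+1 : ℕ):ℝ) * x ^ (2*n+1-1))) x := by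
  have h := hasDerivAt_tsum_pow hb' (m := 2) (k := 1) one_le_two le_rfl one_le_two hx
  have e : (fun y => ∑' n, (c n * ((2*n+2 : ℕ):ℝ)) * y ^ (2*n+1)) = F1 := by
    funext y; rw [F1_eq_tsum]
  exact e ▸ h

lemma F2_eq {x : ℝ} (hx : |x| < 1) :
    ∑' n, (c n * ((2*n+2 : ℕ):ℝ)) * (((2*n+1 : ℕ):ℝ) * x ^ (2*n+1-1)) =
      (5 - 3*x^2) * S (x^2) := by
  have hx2 : |x^2| < 1 := by
    rw [abs_pow]; nlinarith [abs_nonneg x]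
  have hS2 := hasSum_S hx2
  have h5 : HasSum (fun i : ℕ => 5 * (B i * x ^ (2*i))) (5 * S (x^2)) := by
    have e : (fun i : ℕ => 5 * (B i * (x^2) ^ i)) = (fun i : ℕ => 5 * (B i * x ^ (2*i))) := by
      funext i; rw [pow_mul]
    exact e ▸ (hS2.mul_left 5)
  have h3 : HasSum (fun i : ℕ => 3 * (B i * x ^ (2*i+2))) ((3*x^2) * S (x^2)) := by
    have e : (fun i : ℕ => (3*x^2) * (B i * (x^2) ^ i)) =
        (fun i : ℕ => 3 * (B i * x ^ (2*i+2))) := by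
      funext i; rw [pow_add, pow_mul]; ring
    exact e ▸ (hS2.mul_left (3*x^2))
  set fn : ℕ → ℝ := fun n => if n = 0 then 0 else 3 * (B (n-1) * x ^ (2*n)) with hfn_def
  have harg : HasSum (fun n => fn (n+1)) ((3*x^2) * S (x^2) - ∑ i ∈ Finset.range 1, fn i) := by
    have e : (fun n : ℕ => fn (n+1)) = (fun i : ℕ => 3 * (B i * x ^ (2*i+2))) := by
      funext n
      simp only [hfn_def, Nat.succ_ne_zero, if_false, Nat.add_sub_cancel]
      rw [show 2*(n+1) = 2*n+2 by ring]
    rw [e]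
    simpa [hfn_def] using h3
  have hfn : HasSum fn ((3*x^2) * S (x^2)) := (hasSum_nat_add_iff' 1).1 harg
  have hcomb := h5.sub hfn
  have e2 : (fun i : ℕ => 5 * (B i * x ^ (2*i)) - fn i) =
      (fun n : ℕ => (c n * ((2*n+2 : ℕ):ℝ)) * (((2*n+1 : ℕ):ℝ) * x ^ (2*n+1-1))) := by
    funext i
    have he : 2*i+1-1 = 2*i := by omega
    rw [he]
    cases i with
    | zero =>
      have kc := key_coeff 0
      simp only [if_pos rfl, sub_zero] at kc
      simp only [hfn_def, if_pos rfl, sub_zero]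
      push_cast
      push_cast at kc
      linear_combination -kc
    | succ p =>
      have kc := key_coeff (p+1)
      simp only [Nat.succ_ne_zero, if_false, Nat.add_sub_cancel] at kc
      simp only [hfn_def, Nat.succ_ne_zero, if_false, Nat.add_sub_cancel]
      rw [show 2*(p+1) = 2*p+2 by ring]
      push_cast
      push_cast at kc
      linear_combination (-(x ^ (2*p+2))) * kc
  rw [e2] at hcomb
  rw [hcomb.tsum_eq]
  ring

def G (t : ℝ) : ℝ := 3 * t * arcsin t + Real.sqrt (1 - t^2) - 1
def G1 (t : ℝ) : ℝ := 3 * arcsin t + (2 * t) * (Real.sqrt (1 - t^2))⁻¹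

lemma hasDerivAt_G {x : ℝ} (hx : x ∈ Ioo (-1:ℝ) 1) : HasDerivAt G (G1 x) x := by
  have hne1 : x ≠ -1 := by intro h; rw [h] at hx; exact lt_irrefl _ hx.1
  have hne2 : x ≠ 1 := by intro h; rw [h] at hx; exact lt_irrefl _ hx.2
  have hx1 : (0:ℝ) < 1 - x^2 := by nlinarith [hx.1, hx.2]
  have hs : 0 < Real.sqrt (1 - x^2) := Real.sqrt_pos.2 hx1
  have harc := Real.hasDerivAt_arcsin hne1 hne2
  have hmul := ((hasDerivAt_id x).const_mul 3).mul harc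
  have hq : HasDerivAt (fun y : ℝ => 1 - y^2) (-(2*x)) x := by
    simpa using ((hasDerivAt_pow 2 x).const_sub 1)
  have hsq := hq.sqrt (ne_of_gt hx1)
  have htot := (hmul.add hsq).sub_const 1
  refine htot.congr_deriv ?_
  rw [G1]
  have hG : (fun y => 3 * y * arcsin y + Real.sqrt (1 - y^2) - 1) = G := rfl
  simp only [id_eq]
  field_simp
  ring
lemma hasDerivAt_G1 {x : ℝ} (hx : x ∈ Ioo (-1:ℝ) 1) :
    HasDerivAt G1 ((5 - 3*x^2) * S (x^2)) x := by
  have hne1 : x ≠ -1 := by intro h; rw [h] at hx; exact lt_irrefl _ hx.1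
  have hne2 : x ≠ 1 := by intro h; rw [h] at hx; exact lt_irrefl _ hx.2
  have hx1 : (0:ℝ) < 1 - x^2 := by nlinarith [hx.1, hx.2]
  have hs : 0 < Real.sqrt (1 - x^2) := Real.sqrt_pos.2 hx1
  have hs2 : Real.sqrt (1 - x^2) ^ 2 = 1 - x^2 := Real.sq_sqrt hx1.le
  have harc := (Real.hasDerivAt_arcsin hne1 hne2).const_mul 3
  have hq : HasDerivAt (fun y : ℝ => 1 - y^2) (-(2*x)) x := by
    simpa using ((hasDerivAt_pow 2 x).const_sub 1)
  have hsq := hq.sqrt (ne_of_gt hx1)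
  have hinv := hsq.inv (ne_of_gt hs)
  have hmul := ((hasDerivAt_id x).const_mul 2).mul hinv
  have htot := harc.add hmul
  have hSval : S (x^2) = ((1 - x^2) * Real.sqrt (1 - x^2))⁻¹ := by
    apply eq_inv_of_mul_eq_one_left
    rw [mul_comm]
    exact S_eq (u := x^2) ⟨by nlinarith [hx.1, hx.2], by nlinarith [hx.1, hx.2]⟩
  refine htot.congr_deriv ?_
  rw [hSval]
  simp only [id_eq, Pi.inv_apply]
  field_simp
  linear_combination (-2 * x^2) * hs2

lemma F_zero : F 0 = 0 := by
  rw [F]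
  convert tsum_zero with i
  simp [zero_pow]

lemma F1_zero : F1 0 = 0 := by
  rw [F1_eq_tsum]
  convert tsum_zero with i
  simp [zero_pow]

lemma G_zero : G 0 = 0 := by simp [G]

lemma G1_zero : G1 0 = 0 := by simp [G1]

lemma F1_eq_G1 {x : ℝ} (hx : x ∈ Ioo (-1:ℝ) 1) : F1 x = G1 x := by
  have hd : ∀ y ∈ Ioo (-1:ℝ) 1, HasDerivAt (fun z => F1 z - G1 z) 0 y := by
    intro y hy
    have habs : |y| < 1 := abs_lt.2 ⟨hy.1, hy.2⟩
    have h := (hasDerivAt_F1 habs).sub (hasDerivAt_G1 hy)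
    have e : (∑' n, (c n * ((2*n+2 : ℕ):ℝ)) * (((2*n+1 : ℕ):ℝ) * y ^ (2*n+1-1))) -
        (5 - 3*y^2) * S (y^2) = 0 := by
      rw [F2_eq habs]; ring
    rwa [e] at h
  have := const_of_deriv hd x hx
  simp only [F1_zero, G1_zero, sub_zero] at this
  linarith [this]

lemma F_eq_G {x : ℝ} (hx : x ∈ Ioo (-1:ℝ) 1) : F x = G x := by
  have hd : ∀ y ∈ Ioo (-1:ℝ) 1, HasDerivAt (fun z => F z - G z) 0 y := by
    intro y hy
    have habs : |y| < 1 := abs_lt.2 ⟨hy.1, hy.2⟩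
    have h := (hasDerivAt_F habs).sub (hasDerivAt_G hy)
    rw [F1_eq_G1 hy, sub_self] at h
    exact h
  have := const_of_deriv hd x hx
  simp only [F_zero, G_zero, sub_zero] at this
  linarith [this]

lemma summable_c_pow {t : ℝ} (ht : |t| ≤ 1) : Summable (fun i => c i * t ^ (2*i+2)) := by
  apply Summable.of_norm_bounded summable_c
  intro i
  rw [Real.norm_eq_abs, abs_mul, abs_of_nonneg (c_nonneg i), abs_pow]
  calc c i * |t| ^ (2*i+2) ≤ c i * 1 := by
        apply mul_le_mul_of_nonneg_left _ (c_nonneg i)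
        exact pow_le_one₀ (abs_nonneg t) ht
    _ = c i := mul_one _

lemma contF : ContinuousOn F (Icc (-1:ℝ) 1) := by
  apply continuousOn_tsum (u := c)
  · exact fun i => (continuous_const.mul (continuous_pow (2*i+2))).continuousOn
  · exact summable_c
  · intro n x hx
    have ht : |x| ≤ 1 := abs_le.2 ⟨hx.1, hx.2⟩
    rw [Real.norm_eq_abs, abs_mul, abs_of_nonneg (c_nonneg n), abs_pow]
    calc c n * |x| ^ (2*n+2) ≤ c n * 1 := by
          apply mul_le_mul_of_nonneg_left _ (c_nonneg n)
          exact pow_le_one₀ (abs_nonneg x) ht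
      _ = c n := mul_one _

lemma contG : Continuous G := by
  apply Continuous.sub _ continuous_const
  apply Continuous.add
  · exact (continuous_const.mul continuous_id).mul Real.continuous_arcsin
  · exact Real.continuous_sqrt.comp (continuous_const.sub (continuous_pow 2))

lemma F_eq_G_Icc {t : ℝ} (ht : t ∈ Icc (-1:ℝ) 1) : F t = G t := by
  have hcl : t ∈ closure (Ioo (-1:ℝ) 1) := by
    rw [closure_Ioo (by norm_num : (-1:ℝ) ≠ 1)]
    exact ht
  have hne : (nhdsWithin t (Ioo (-1:ℝ) 1)).NeBot :=
    mem_closure_iff_nhdsWithin_neBot.1 hcl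
  have l1 : Filter.Tendsto F (nhdsWithin t (Ioo (-1:ℝ) 1)) (nhds (F t)) :=
    ((contF t ht).mono Ioo_subset_Icc_self)
  have l2 : Filter.Tendsto G (nhdsWithin t (Ioo (-1:ℝ) 1)) (nhds (G t)) :=
    (contG.continuousAt).continuousWithinAt
  have heq : ∀ᶠ x in nhdsWithin t (Ioo (-1:ℝ) 1), G x = F x :=
    eventually_mem_nhdsWithin.mono (fun x hx => (F_eq_G hx).symm)
  have l3 : Filter.Tendsto F (nhdsWithin t (Ioo (-1:ℝ) 1)) (nhds (G t)) :=
    l2.congr' heq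
  exact tendsto_nhds_unique l1 l3

end St10

/-- For `t ∈ [−1,1]`, the function `U(t) = 3t(π − arccos t) + √(1 − t²)`
has the convergent power-series representation
`U(t) = 1 + (3π/2)t + Σ_{i≥0} [(4i+5)(1/2)_i / (2(2i+1)(i+1) i!)] t^{2i+2}`,
and all the coefficients of this power series are nonnegative. -/
theorem statement_10 :
    let c : ℕ → ℝ := fun i =>
      (4 * (i : ℝ) + 5) * (ascPochhammer ℝ i).eval (1 / 2 : ℝ) /
        (2 * (2 * (i : ℝ) + 1) * ((i : ℝ) + 1) * (Nat.factorial i))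
    (∀ t ∈ Set.Icc (-1 : ℝ) 1,
        HasSum (fun i : ℕ => c i * t ^ (2 * i + 2))
          ((3 * t * (Real.pi - Real.arccos t) + Real.sqrt (1 - t ^ 2)) -
            (1 + 3 * Real.pi / 2 * t))) ∧
      ∀ i, 0 ≤ c i := by
  intro c
  constructor
  · intro t ht
    have habs : |t| ≤ 1 := abs_le.2 ⟨ht.1, ht.2⟩
    have hsum := (St10.summable_c_pow habs).hasSum
    have hFt : (∑' i, St10.c i * t ^ (2*i+2)) = St10.F t := rfl
    rw [hFt, St10.F_eq_G_Icc ht] at hsum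
    have htarget : (3 * t * (Real.pi - Real.arccos t) + Real.sqrt (1 - t ^ 2)) -
        (1 + 3 * Real.pi / 2 * t) = St10.G t := by
      rw [St10.G, Real.arccos_eq_pi_div_two_sub_arcsin]; ring
    rw [htarget]
    exact hsum
  · exact fun i => St10.c_nonneg i
end
end

section
/- Fix an integer ι ≥ 1. There exists a constant C depending only on ι and on the one-dimensional distribution P (through bounds on the triple products E_{z∼P}[q_a(z)q_b(z)q_c(z)] for indices a,b,c ≤ 2ι) such that for every dimension d and every family of real coefficients (γ_r) indexed by multi-indices r = (r_1,…,r_d) with |r| ≤ ι, the function f_γ(x) := Σ_{|r| ≤ ι} γ_r q_r(x) satisfies E_{X∼P^{⊗d}}[ f_γ(X)⁴ ] ≤ C ( E_{X∼P^{⊗d}}[ f_γ(X)² ] )² = C ( Σ_{|r| ≤ ι} γ_r² )². -/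
open MeasureTheory

/-- The finite set of multi-indices `r : Fin d → ℕ` with `Σ_i r_i ≤ ι`, encoded with
coordinates in `Fin (ι+1)`. -/
abbrev MIdx (d ι : ℕ) := {r : Fin d → Fin (ι + 1) // ∑ i, (r i : ℕ) ≤ ι}

section Aux

set_option maxHeartbeats 1000000
set_option linter.unusedSectionVars false

open Finset

variable (P : Measure ℝ) [IsProbabilityMeasure P]

lemma int_poly (hmom : ∀ m : ℕ, Integrable (fun z => z ^ m) P) (p : Polynomial ℝ) :
    Integrable (fun z => p.eval z) P := by
  have h : (fun z : ℝ => p.eval z)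
      = fun z => ∑ n ∈ Finset.range (p.natDegree + 1), p.coeff n * z ^ n := by
    funext z; exact p.eval_eq_sum_range z
  rw [h]
  exact integrable_finset_sum _ fun n _ => (hmom n).const_mul _

lemma int_pi_prod {d : ℕ} {f : Fin d → ℝ → ℝ} (hf : ∀ i, Integrable (f i) P) :
    Integrable (fun x : Fin d → ℝ => ∏ i, f i (x i)) (Measure.pi fun _ => P) := by
  induction d with
  | zero =>
    simp only [Finset.univ_eq_empty, Finset.prod_empty]
    exact integrable_const 1
  | succ n ih =>
    have hmp := ((measurePreserving_piFinSuccAbove (fun _ : Fin (n+1) => P) 0).symm)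
    rw [← hmp.integrable_comp_emb (MeasurableEquiv.measurableEmbedding _)]
    have h : ((fun x : Fin (n+1) → ℝ => ∏ i, f i (x i)) ∘
        (MeasurableEquiv.piFinSuccAbove (fun _ => ℝ) 0).symm)
        = fun p : ℝ × (Fin n → ℝ) => f 0 p.1 * ∏ j, f j.succ (p.2 j) := by
      funext p
      simp only [Function.comp_apply, MeasurableEquiv.piFinSuccAbove_symm_apply,
        Fin.insertNthEquiv, Equiv.coe_fn_mk, Fin.insertNth_zero]
      rw [Fin.prod_univ_succ]
      simp [Fin.cons_zero, Fin.cons_succ, Fin.zero_succAbove]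
    rw [h]
    exact (hf 0).mul_prod (ih fun j => hf j.succ)

lemma integral_pi_prod {d : ℕ} (f : Fin d → ℝ → ℝ) :
    (∫ x : Fin d → ℝ, ∏ i, f i (x i) ∂(Measure.pi fun _ => P)) = ∏ i, ∫ z, f i z ∂P := by
  induction d with
  | zero => simp
  | succ n ih =>
    have hmp := ((measurePreserving_piFinSuccAbove (fun _ : Fin (n+1) => P) 0).symm)
    rw [← hmp.integral_comp']
    have h : (fun p : ℝ × (Fin n → ℝ) =>
        (∏ i, f i (((MeasurableEquiv.piFinSuccAbove (fun _ => ℝ) 0).symm p) i)))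
        = fun p : ℝ × (Fin n → ℝ) => f 0 p.1 * ∏ j, f j.succ (p.2 j) := by
      funext p
      simp only [MeasurableEquiv.piFinSuccAbove_symm_apply,
        Fin.insertNthEquiv, Equiv.coe_fn_mk, Fin.insertNth_zero]
      rw [Fin.prod_univ_succ]
      simp [Fin.cons_zero, Fin.cons_succ, Fin.zero_succAbove]
    rw [show (fun p => ∏ i, f i ((MeasurableEquiv.piFinSuccAbove (fun _ => ℝ) 0).symm p i)) = _ from h]
    rw [integral_prod_mul (μ := P) (ν := Measure.pi fun _ : Fin n => P)
      (f := f 0) (g := fun y => ∏ j, f j.succ (y j))]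
    rw [ih fun j => f j.succ, Fin.prod_univ_succ]

-- integrability of multivariate polynomial evaluations
lemma int_mvpoly (hmom : ∀ m : ℕ, Integrable (fun z => z ^ m) P) {d : ℕ}
    (F : MvPolynomial (Fin d) ℝ) :
    Integrable (fun x : Fin d → ℝ => MvPolynomial.eval x F) (Measure.pi fun _ => P) := by
  have h : (fun x : Fin d → ℝ => MvPolynomial.eval x F)
      = fun x => ∑ m ∈ F.support, F.coeff m * ∏ i, x i ^ m i := by
    funext x
    rw [MvPolynomial.eval_eq']
  rw [h]
  refine integrable_finset_sum _ fun m _ => ?_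
  exact (int_pi_prod P (f := fun i z => z ^ m i) (fun i => hmom (m i))).const_mul _

lemma int_of_eq_mvpoly (hmom : ∀ m : ℕ, Integrable (fun z => z ^ m) P) {d : ℕ}
    {f : (Fin d → ℝ) → ℝ} (F : MvPolynomial (Fin d) ℝ)
    (h : ∀ x, f x = MvPolynomial.eval x F) :
    Integrable f (Measure.pi fun _ => P) := by
  have : f = fun x => MvPolynomial.eval x F := funext h
  rw [this]; exact int_mvpoly P hmom F

-- evaluation of single-coordinate polynomial as mv polynomial
lemma eval_aeval_X {d : ℕ} (i : Fin d) (p : Polynomial ℝ) (x : Fin d → ℝ) :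
    MvPolynomial.eval x (Polynomial.aeval (MvPolynomial.X i : MvPolynomial (Fin d) ℝ) p)
      = p.eval (x i) := by
  rw [show MvPolynomial.eval x (Polynomial.aeval (MvPolynomial.X i : MvPolynomial (Fin d) ℝ) p)
      = MvPolynomial.aeval x (Polynomial.aeval (MvPolynomial.X i : MvPolynomial (Fin d) ℝ) p) from rfl]
  rw [← Polynomial.aeval_algHom_apply]
  simp only [MvPolynomial.aeval_X, Polynomial.coe_aeval_eq_eval]

variable (q : ℕ → Polynomial ℝ)

lemma eval_Qprod {d : ℕ} (r : Fin d → ℕ) (x : Fin d → ℝ) :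
    MvPolynomial.eval x (∏ i, Polynomial.aeval (MvPolynomial.X i : MvPolynomial (Fin d) ℝ) (q (r i)))
      = ∏ i, (q (r i)).eval (x i) := by
  rw [map_prod]
  exact Finset.prod_congr rfl fun i _ => eval_aeval_X i (q (r i)) x

lemma orth_prod (hqorth : ∀ j k, (∫ z, (q j).eval z * (q k).eval z ∂P) = if j = k then 1 else 0)
    {d : ℕ} (r s : Fin d → ℕ) :
    (∫ x : Fin d → ℝ, (∏ i, (q (r i)).eval (x i)) * ∏ i, (q (s i)).eval (x i)
      ∂(Measure.pi fun _ => P)) = if r = s then 1 else 0 := by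
  have h : (fun x : Fin d → ℝ => (∏ i, (q (r i)).eval (x i)) * ∏ i, (q (s i)).eval (x i))
      = fun x => ∏ i, ((q (r i)).eval (x i) * (q (s i)).eval (x i)) := by
    funext x; rw [Finset.prod_mul_distrib]
  rw [h, integral_pi_prod P (f := fun i z => (q (r i)).eval z * (q (s i)).eval z)]
  by_cases hrs : r = s
  · subst hrs
    simp only [hqorth, if_pos rfl, if_true]
    simp
  · obtain ⟨i, hi⟩ := Function.ne_iff.mp hrs
    rw [if_neg hrs]
    refine Finset.prod_eq_zero (Finset.mem_univ i) ?_
    rw [hqorth, if_neg hi]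

lemma L2_iden (hqorth : ∀ j k, (∫ z, (q j).eval z * (q k).eval z ∂P) = if j = k then 1 else 0)
    {d : ℕ} {κ : Type*} [Fintype κ] (ρ : κ → (Fin d → ℕ)) (hρ : Function.Injective ρ)
    (hmom : ∀ m : ℕ, Integrable (fun z => z ^ m) P) (δ : κ → ℝ) :
    (∫ x : Fin d → ℝ, (∑ a, δ a * ∏ i, (q (ρ a i)).eval (x i)) ^ 2
      ∂(Measure.pi fun _ => P)) = ∑ a, δ a ^ 2 := by
  have hexp : (fun x : Fin d → ℝ => (∑ a, δ a * ∏ i, (q (ρ a i)).eval (x i)) ^ 2)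
      = fun x => ∑ a, ∑ b, (δ a * δ b) *
          ((∏ i, (q (ρ a i)).eval (x i)) * ∏ i, (q (ρ b i)).eval (x i)) := by
    funext x
    rw [pow_two, Finset.sum_mul_sum]
    refine Finset.sum_congr rfl fun a _ => Finset.sum_congr rfl fun b _ => ?_
    ring
  rw [hexp]
  have hint : ∀ (a b : κ), Integrable (fun x : Fin d → ℝ => (δ a * δ b) *
      ((∏ i, (q (ρ a i)).eval (x i)) * ∏ i, (q (ρ b i)).eval (x i)))
      (Measure.pi fun _ => P) := by
    intro a b
    have h2 : (fun x : Fin d → ℝ =>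
        (∏ i, (q (ρ a i)).eval (x i)) * ∏ i, (q (ρ b i)).eval (x i))
        = fun x => ∏ i, ((q (ρ a i)).eval (x i) * (q (ρ b i)).eval (x i)) := by
      funext x; rw [Finset.prod_mul_distrib]
    refine Integrable.const_mul ?_ _
    rw [h2]
    exact (int_pi_prod P (f := fun i z => (q (ρ a i)).eval z * (q (ρ b i)).eval z)
      (fun i => by
        show Integrable (fun z : ℝ => (q (ρ a i)).eval z * (q (ρ b i)).eval z) P
        have : (fun z : ℝ => (q (ρ a i)).eval z * (q (ρ b i)).eval z)
            = fun z => (q (ρ a i) * q (ρ b i)).eval z := by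
          funext z; rw [Polynomial.eval_mul]
        rw [this]; exact int_poly P hmom _))
  rw [integral_finset_sum _ fun a _ => integrable_finset_sum _ fun b _ => hint a b]
  have : ∀ a : κ, (∫ x : Fin d → ℝ, ∑ b, (δ a * δ b) *
      ((∏ i, (q (ρ a i)).eval (x i)) * ∏ i, (q (ρ b i)).eval (x i))
      ∂(Measure.pi fun _ => P)) = δ a ^ 2 := by
    intro a
    rw [integral_finset_sum _ fun b _ => hint a b]
    have hterm : ∀ b : κ, (∫ x : Fin d → ℝ, (δ a * δ b) *
        ((∏ i, (q (ρ a i)).eval (x i)) * ∏ i, (q (ρ b i)).eval (x i))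
        ∂(Measure.pi fun _ => P)) = (δ a * δ b) * if ρ a = ρ b then 1 else 0 := by
      intro b
      rw [integral_const_mul, orth_prod P q hqorth]
    rw [Finset.sum_congr rfl fun b _ => hterm b]
    rw [Finset.sum_eq_single a]
    · simp [pow_two]
    · intro b _ hb
      rw [if_neg fun h => hb (hρ h).symm, mul_zero]
    · intro h; exact absurd (Finset.mem_univ a) h
  rw [Finset.sum_congr rfl fun a _ => this a]

lemma int_CS {α : Type*} [MeasurableSpace α] (μ : Measure α) {u v : α → ℝ}
    (hu : Integrable (fun x => u x ^ 2) μ) (hv : Integrable (fun x => v x ^ 2) μ)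
    (huv : Integrable (fun x => u x * v x) μ) :
    (∫ x, u x * v x ∂μ) ^ 2 ≤ (∫ x, u x ^ 2 ∂μ) * ∫ x, v x ^ 2 ∂μ := by
  have key : ∀ t : ℝ, 0 ≤ (∫ x, u x ^ 2 ∂μ) * (t * t) + (2 * ∫ x, u x * v x ∂μ) * t
      + ∫ x, v x ^ 2 ∂μ := by
    intro t
    have h1 : (∫ x, u x ^ 2 ∂μ) * (t * t) + (2 * ∫ x, u x * v x ∂μ) * t + ∫ x, v x ^ 2 ∂μ
        = ∫ x, (t * u x + v x) ^ 2 ∂μ := by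
      have hexp : (fun x => (t * u x + v x) ^ 2)
          = fun x => (t * t) * u x ^ 2 + (2 * t) * (u x * v x) + v x ^ 2 := by
        funext x; ring
      have e1 : Integrable (fun x => t * t * u x ^ 2) μ := hu.const_mul (t * t)
      have e2 : Integrable (fun x => 2 * t * (u x * v x)) μ := huv.const_mul (2 * t)
      have e12 : Integrable (fun x => t * t * u x ^ 2 + 2 * t * (u x * v x)) μ := e1.add e2
      rw [hexp, integral_add e12 hv, integral_add e1 e2,
        integral_const_mul, integral_const_mul]
      ring
    rw [h1]
    exact integral_nonneg fun x => sq_nonneg _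
  have hd := discrim_le_zero key
  rw [discrim] at hd
  nlinarith [hd]

/-- the one-coordinate slice functions -/
def gfun (q : ℕ → Polynomial ℝ) {d ι' : ℕ} (γ : (Fin (d+1) → Fin (ι'+1)) → ℝ)
    (k : Fin (ι'+1)) : (Fin d → ℝ) → ℝ :=
  fun y => ∑ r' : Fin d → Fin (ι'+1), γ (Fin.cons k r') * ∏ i, (q ((r' i : ℕ))).eval (y i)

/-- quadruple product integral -/
noncomputable def c4 (P : Measure ℝ) (q : ℕ → Polynomial ℝ) (k1 k2 k3 k4 : ℕ) : ℝ :=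
  ∫ z, (q k1).eval z * (q k2).eval z * ((q k3).eval z * (q k4).eval z) ∂P

lemma int_q4 (hmom : ∀ m : ℕ, Integrable (fun z => z ^ m) P) (k1 k2 k3 k4 : ℕ) :
    Integrable (fun z => (q k1).eval z * (q k2).eval z * ((q k3).eval z * (q k4).eval z)) P := by
  have h : (fun z => (q k1).eval z * (q k2).eval z * ((q k3).eval z * (q k4).eval z))
      = fun z => (q k1 * q k2 * (q k3 * q k4)).eval z := by
    funext z; simp [Polynomial.eval_mul]
  rw [h]; exact int_poly P hmom _

lemma c4_1111 (hq0 : q 0 = 1) : c4 P q 0 0 0 0 = 1 := by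
  simp [c4, hq0]

lemma int_q_eval_zero (hq0 : q 0 = 1)
    (hqorth : ∀ j k, (∫ z, (q j).eval z * (q k).eval z ∂P) = if j = k then 1 else 0)
    {k : ℕ} (hk : k ≠ 0) : (∫ z, (q k).eval z ∂P) = 0 := by
  have h := hqorth k 0
  rw [hq0] at h
  simpa [hk] using h

lemma c4_single (hq0 : q 0 = 1)
    (hqorth : ∀ j k, (∫ z, (q j).eval z * (q k).eval z ∂P) = if j = k then 1 else 0)
    {k : ℕ} (hk : k ≠ 0) :
    c4 P q k 0 0 0 = 0 ∧ c4 P q 0 k 0 0 = 0 ∧ c4 P q 0 0 k 0 = 0 ∧ c4 P q 0 0 0 k = 0 := by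
  have base := int_q_eval_zero P q hq0 hqorth hk
  refine ⟨?_, ?_, ?_, ?_⟩ <;>
    · rw [c4]
      rw [hq0]
      simpa using base

lemma sum_pow_four {κ : Type*} [Fintype κ] (a : κ → ℝ) :
    (∑ k, a k)^4 = ∑ k1, ∑ k2, ∑ k3, ∑ k4, a k1 * a k2 * (a k3 * a k4) := by
  rw [show (∑ k, a k)^4 = ((∑ k, a k) * (∑ k, a k)) * ((∑ k, a k) * (∑ k, a k)) by ring]
  rw [Finset.sum_mul_sum, Finset.sum_mul_sum]
  refine Finset.sum_congr rfl fun k1 _ => ?_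
  rw [Finset.sum_congr rfl fun j (_ : j ∈ Finset.univ) =>
    (Finset.sum_mul_sum Finset.univ Finset.univ (fun k => a k1 * a k) (fun k => a j * a k))]
  exact Finset.sum_comm

lemma abs_int_mul_le {α : Type*} [MeasurableSpace α] (μ : Measure α) {u v : α → ℝ}
    (hu : Integrable (fun x => u x ^ 2) μ) (hv : Integrable (fun x => v x ^ 2) μ)
    (huv : Integrable (fun x => u x * v x) μ) :
    |∫ x, u x * v x ∂μ| ≤ Real.sqrt (∫ x, u x ^ 2 ∂μ) * Real.sqrt (∫ x, v x ^ 2 ∂μ) := by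
  have h := int_CS μ hu hv huv
  rw [← Real.sqrt_sq_eq_abs, ← Real.sqrt_mul (integral_nonneg fun x => sq_nonneg (u x))]
  exact Real.sqrt_le_sqrt h
lemma step_bound
    (hmom : ∀ m : ℕ, Integrable (fun z => z ^ m) P)
    (hq0 : q 0 = 1)
    (hqorth : ∀ j k, (∫ z, (q j).eval z * (q k).eval z ∂P) = if j = k then 1 else 0)
    {ι m d : ℕ} {K M : ℝ}
    (hM : ∀ k1 k2 k3 k4 : Fin (ι+1), |c4 P q k1 k2 k3 k4| ≤ M)
    (hM1 : 1 ≤ M)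
    (hK : ((ι:ℝ)+1)^8 * M^2 ≤ K) (hK1 : 1 ≤ K)
    (ihm : ∀ γ' : (Fin d → Fin (ι+1)) → ℝ, (∀ r, γ' r ≠ 0 → ∑ i, (r i : ℕ) ≤ m) →
      (∫ y : Fin d → ℝ, (∑ r', γ' r' * ∏ i, (q ((r' i : ℕ))).eval (y i)) ^ 4
        ∂(Measure.pi fun _ => P)) ≤ K ^ m * (∑ r', γ' r' ^ 2) ^ 2)
    (ihd : ∀ γ' : (Fin d → Fin (ι+1)) → ℝ, (∀ r, γ' r ≠ 0 → ∑ i, (r i : ℕ) ≤ m + 1) →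
      (∫ y : Fin d → ℝ, (∑ r', γ' r' * ∏ i, (q ((r' i : ℕ))).eval (y i)) ^ 4
        ∂(Measure.pi fun _ => P)) ≤ K ^ (m+1) * (∑ r', γ' r' ^ 2) ^ 2)
    (γ : (Fin (d+1) → Fin (ι+1)) → ℝ)
    (hγ : ∀ r, γ r ≠ 0 → ∑ i, (r i : ℕ) ≤ m + 1) :
    (∫ x : Fin (d+1) → ℝ, (∑ r, γ r * ∏ i, (q ((r i : ℕ))).eval (x i)) ^ 4
      ∂(Measure.pi fun _ => P)) ≤ K ^ (m+1) * (∑ r, γ r ^ 2) ^ 2 := by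
  classical
  set μd : Measure (Fin d → ℝ) := Measure.pi fun _ => P with hμd
  set g : Fin (ι+1) → (Fin d → ℝ) → ℝ := gfun q γ with hgdef
  set A : Fin (ι+1) → ℝ := fun k => ∑ r' : Fin d → Fin (ι+1), γ (Fin.cons k r') ^ 2 with hA
  set S : ℝ := ∑ r : Fin (d+1) → Fin (ι+1), γ r ^ 2 with hS
  set b : ℝ := ∑ k ∈ Finset.univ.erase (0 : Fin (ι+1)), A k with hb
  have hA0 : ∀ k, 0 ≤ A k := fun k => Finset.sum_nonneg fun _ _ => sq_nonneg _
  have hSsplit : ∑ k, A k = S := by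
    rw [hS]
    calc ∑ k, A k = ∑ p : Fin (ι+1) × (Fin d → Fin (ι+1)), γ (Fin.cons p.1 p.2) ^ 2 :=
          (Fintype.sum_prod_type (f := fun p : Fin (ι+1) × (Fin d → Fin (ι+1)) =>
            γ (Fin.cons p.1 p.2) ^ 2)).symm
      _ = ∑ r, γ r ^ 2 := Fintype.sum_equiv (Fin.consEquiv fun _ => Fin (ι+1))
            (fun p => γ (Fin.cons p.1 p.2) ^ 2) (fun r => γ r ^ 2) (fun p => rfl)
  have hbS : A 0 + b = S := by
    rw [← hSsplit, hb]
    exact Finset.add_sum_erase _ _ (Finset.mem_univ 0)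
  have hS0 : 0 ≤ S := Finset.sum_nonneg fun _ _ => sq_nonneg _
  have hb0 : 0 ≤ b := Finset.sum_nonneg fun k _ => hA0 k
  have hAS : ∀ k, A k ≤ S := by
    intro k
    rw [← hSsplit]
    exact Finset.single_le_sum (fun k _ => hA0 k) (Finset.mem_univ k)
  have hAb : ∀ k, k ≠ 0 → A k ≤ b :=
    fun k hk => Finset.single_le_sum (fun k _ => hA0 k) (Finset.mem_erase.mpr ⟨hk, Finset.mem_univ k⟩)
  have hconssum : ∀ (k : Fin (ι+1)) (r : Fin d → Fin (ι+1)),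
      ∑ i : Fin (d+1), ((Fin.cons k r : Fin (d+1) → Fin (ι+1)) i : ℕ) = (k : ℕ) + ∑ i, (r i : ℕ) := by
    intro k r
    rw [Fin.sum_univ_succ]
    simp [Fin.cons_succ]
  -- fourth-moment bounds on the slice functions
  have hg40 : (∫ y, (g 0 y) ^ 4 ∂μd) ≤ K ^ (m+1) * (A 0) ^ 2 := by
    exact ihd (fun r' => γ (Fin.cons 0 r')) (fun r hr => by
      have := hγ (Fin.cons 0 r) hr
      rw [hconssum 0 r] at this
      simpa using this)
  have hg4k : ∀ k : Fin (ι+1), k ≠ 0 → (∫ y, (g k y) ^ 4 ∂μd) ≤ K ^ m * (A k) ^ 2 := by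
    intro k hk
    exact ihm (fun r' => γ (Fin.cons k r')) (fun r hr => by
      have h1 := hγ (Fin.cons k r) hr
      rw [hconssum k r] at h1
      have h2 : (k : ℕ) ≠ 0 := fun h => hk (by ext; simpa using h)
      omega)
  set B : Fin (ι+1) → ℝ := fun k => Real.sqrt (∫ y, (g k y) ^ 4 ∂μd) with hB
  have hB0 : ∀ k, 0 ≤ B k := fun k => Real.sqrt_nonneg _
  set p' : ℝ := Real.sqrt (K ^ (m+1)) * S with hp'
  set q' : ℝ := Real.sqrt (K ^ m) * b with hq'
  have hKpos : (0:ℝ) < K := lt_of_lt_of_le one_pos hK1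
  have hp'0 : 0 ≤ p' := mul_nonneg (Real.sqrt_nonneg _) hS0
  have hq'0 : 0 ≤ q' := mul_nonneg (Real.sqrt_nonneg _) hb0
  have hsqrtmono : Real.sqrt (K ^ m) ≤ Real.sqrt (K ^ (m+1)) :=
    Real.sqrt_le_sqrt (pow_le_pow_right₀ hK1 (Nat.le_succ m))
  have hBp : ∀ k, B k ≤ p' := by
    intro k
    by_cases hk : k = 0
    · subst hk
      rw [hB]
      calc Real.sqrt (∫ y, (g 0 y) ^ 4 ∂μd) ≤ Real.sqrt (K ^ (m+1) * (A 0) ^ 2) :=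
            Real.sqrt_le_sqrt hg40
        _ = Real.sqrt (K ^ (m+1)) * A 0 := by
            rw [Real.sqrt_mul (le_of_lt (pow_pos hKpos _)), Real.sqrt_sq (hA0 0)]
        _ ≤ p' := by
            rw [hp']
            exact mul_le_mul_of_nonneg_left (hAS 0) (Real.sqrt_nonneg _)
    · rw [hB]
      calc Real.sqrt (∫ y, (g k y) ^ 4 ∂μd) ≤ Real.sqrt (K ^ m * (A k) ^ 2) :=
            Real.sqrt_le_sqrt (hg4k k hk)
        _ = Real.sqrt (K ^ m) * A k := by
            rw [Real.sqrt_mul (le_of_lt (pow_pos hKpos _)), Real.sqrt_sq (hA0 k)]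
        _ ≤ p' := by
            rw [hp']
            exact mul_le_mul hsqrtmono (hAS k) (hA0 k) (Real.sqrt_nonneg _)
  have hBq : ∀ k, k ≠ 0 → B k ≤ q' := by
    intro k hk
    rw [hB]
    calc Real.sqrt (∫ y, (g k y) ^ 4 ∂μd) ≤ Real.sqrt (K ^ m * (A k) ^ 2) :=
          Real.sqrt_le_sqrt (hg4k k hk)
      _ = Real.sqrt (K ^ m) * A k := by
          rw [Real.sqrt_mul (le_of_lt (pow_pos hKpos _)), Real.sqrt_sq (hA0 k)]
      _ ≤ q' := by
          rw [hq']
          exact mul_le_mul_of_nonneg_left (hAb k hk) (Real.sqrt_nonneg _)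
  -- integrability facts
  have hmv : ∀ k : Fin (ι+1), ∃ F : MvPolynomial (Fin d) ℝ, ∀ y, g k y = MvPolynomial.eval y F := by
    intro k
    refine ⟨∑ r' : Fin d → Fin (ι+1), MvPolynomial.C (γ (Fin.cons k r')) *
      ∏ i, Polynomial.aeval (MvPolynomial.X i) (q ((r' i : ℕ))), fun y => ?_⟩
    rw [map_sum]
    refine Finset.sum_congr rfl fun r' _ => ?_
    rw [map_mul, MvPolynomial.eval_C, eval_Qprod q]
  have hint4 : ∀ k1 k2 k3 k4, Integrable (fun y => g k1 y * g k2 y * (g k3 y * g k4 y)) μd := by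
    intro k1 k2 k3 k4
    obtain ⟨F1, h1⟩ := hmv k1
    obtain ⟨F2, h2⟩ := hmv k2
    obtain ⟨F3, h3⟩ := hmv k3
    obtain ⟨F4, h4⟩ := hmv k4
    exact int_of_eq_mvpoly P hmom (F1 * F2 * (F3 * F4))
      (fun y => by rw [h1 y, h2 y, h3 y, h4 y]; simp [map_mul])
  have hintsq : ∀ k1 k2, Integrable (fun y => (g k1 y * g k2 y) ^ 2) μd := by
    intro k1 k2
    obtain ⟨F1, h1⟩ := hmv k1
    obtain ⟨F2, h2⟩ := hmv k2
    exact int_of_eq_mvpoly P hmom ((F1 * F2) ^ 2)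
      (fun y => by rw [map_pow, map_mul, ← h1 y, ← h2 y])
  have hint22 : ∀ k1 k2, Integrable (fun y => (g k1 y) ^ 2 * (g k2 y) ^ 2) μd := by
    intro k1 k2
    obtain ⟨F1, h1⟩ := hmv k1
    obtain ⟨F2, h2⟩ := hmv k2
    exact int_of_eq_mvpoly P hmom (F1 ^ 2 * F2 ^ 2)
      (fun y => by rw [map_mul, map_pow, map_pow, ← h1 y, ← h2 y])
  have hint224 : ∀ k, Integrable (fun y => ((g k y) ^ 2) ^ 2) μd := by
    intro k
    obtain ⟨F1, h1⟩ := hmv k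
    exact int_of_eq_mvpoly P hmom ((F1 ^ 2) ^ 2)
      (fun y => by rw [map_pow, map_pow, ← h1 y])
  -- Cauchy-Schwarz chain
  have hsq4 : ∀ k : Fin (ι+1), (∫ y, ((g k y) ^ 2) ^ 2 ∂μd) = ∫ y, (g k y) ^ 4 ∂μd := by
    intro k
    congr 1
    funext y
    ring
  have hCS2 : ∀ ka kb, (∫ y, (g ka y * g kb y) ^ 2 ∂μd) ≤ B ka * B kb := by
    intro ka kb
    have e1 : (fun y => (g ka y * g kb y) ^ 2) = fun y => (g ka y) ^ 2 * (g kb y) ^ 2 := by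
      funext y; ring
    have c3 := abs_int_mul_le μd (u := fun y => (g ka y)^2) (v := fun y => (g kb y)^2)
      (hint224 ka) (hint224 kb) (hint22 ka kb)
    rw [hsq4 ka, hsq4 kb] at c3
    calc (∫ y, (g ka y * g kb y) ^ 2 ∂μd) = ∫ y, (g ka y) ^ 2 * (g kb y) ^ 2 ∂μd := by rw [e1]
      _ ≤ |∫ y, (g ka y) ^ 2 * (g kb y) ^ 2 ∂μd| := le_abs_self _
      _ ≤ Real.sqrt (∫ y, (g ka y) ^ 4 ∂μd) * Real.sqrt (∫ y, (g kb y) ^ 4 ∂μd) := c3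
      _ = B ka * B kb := by rw [hB]
  have habsI : ∀ k1 k2 k3 k4, |∫ y, g k1 y * g k2 y * (g k3 y * g k4 y) ∂μd| ≤
      Real.sqrt (B k1 * B k2 * (B k3 * B k4)) := by
    intro k1 k2 k3 k4
    have c1 := abs_int_mul_le μd (u := fun y => g k1 y * g k2 y) (v := fun y => g k3 y * g k4 y)
      (hintsq k1 k2) (hintsq k3 k4) (hint4 k1 k2 k3 k4)
    calc |∫ y, g k1 y * g k2 y * (g k3 y * g k4 y) ∂μd|
        ≤ Real.sqrt (∫ y, (g k1 y * g k2 y) ^ 2 ∂μd) * Real.sqrt (∫ y, (g k3 y * g k4 y) ^ 2 ∂μd) := c1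
      _ ≤ Real.sqrt (B k1 * B k2) * Real.sqrt (B k3 * B k4) :=
          mul_le_mul (Real.sqrt_le_sqrt (hCS2 k1 k2)) (Real.sqrt_le_sqrt (hCS2 k3 k4))
            (Real.sqrt_nonneg _) (Real.sqrt_nonneg _)
      _ = Real.sqrt (B k1 * B k2 * (B k3 * B k4)) :=
          (Real.sqrt_mul (mul_nonneg (hB0 k1) (hB0 k2)) _).symm
  have hM0 : (0:ℝ) ≤ M := le_trans zero_le_one hM1
  have hkey : ∀ k1 k2 k3 k4 : Fin (ι+1), B k1 * B k2 * (B k3 * B k4) ≤ (p' * q') ^ 2 →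
      c4 P q k1 k2 k3 k4 * (∫ y, g k1 y * g k2 y * (g k3 y * g k4 y) ∂μd) ≤ M * (p' * q') := by
    intro k1 k2 k3 k4 hBB
    calc c4 P q k1 k2 k3 k4 * (∫ y, g k1 y * g k2 y * (g k3 y * g k4 y) ∂μd)
        ≤ |c4 P q k1 k2 k3 k4 * (∫ y, g k1 y * g k2 y * (g k3 y * g k4 y) ∂μd)| := le_abs_self _
      _ = |c4 P q k1 k2 k3 k4| * |∫ y, g k1 y * g k2 y * (g k3 y * g k4 y) ∂μd| := abs_mul _ _
      _ ≤ M * Real.sqrt (B k1 * B k2 * (B k3 * B k4)) :=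
          mul_le_mul (hM k1 k2 k3 k4) (habsI k1 k2 k3 k4) (abs_nonneg _) hM0
      _ ≤ M * Real.sqrt ((p' * q') ^ 2) :=
          mul_le_mul_of_nonneg_left (Real.sqrt_le_sqrt hBB) hM0
      _ = M * (p' * q') := by rw [Real.sqrt_sq (mul_nonneg hp'0 hq'0)]
  have hmul4 : ∀ x1 x2 x3 x4 y1 y2 y3 y4 : ℝ, 0 ≤ x2 → 0 ≤ x3 → 0 ≤ x4 →
      0 ≤ y1 → 0 ≤ y2 → 0 ≤ y3 →
      x1 ≤ y1 → x2 ≤ y2 → x3 ≤ y3 → x4 ≤ y4 → x1 * x2 * (x3 * x4) ≤ y1 * y2 * (y3 * y4) := by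
    intro x1 x2 x3 x4 y1 y2 y3 y4 hx2 hx3 hx4 hy1 hy2 hy3 h1 h2 h3 h4
    exact mul_le_mul (mul_le_mul h1 h2 hx2 hy1) (mul_le_mul h3 h4 hx4 hy3)
      (mul_nonneg hx3 hx4) (mul_nonneg hy1 hy2)
  -- the expansion identity
  have hexpand : (∫ x : Fin (d+1) → ℝ, (∑ r, γ r * ∏ i, (q ((r i : ℕ))).eval (x i)) ^ 4
      ∂(Measure.pi fun _ => P))
      = ∑ t : Fin (ι+1) × Fin (ι+1) × Fin (ι+1) × Fin (ι+1),
          c4 P q t.1 t.2.1 t.2.2.1 t.2.2.2 *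
            ∫ y, g t.1 y * g t.2.1 y * (g t.2.2.1 y * g t.2.2.2 y) ∂μd := by
    rw [← ((measurePreserving_piFinSuccAbove (fun _ : Fin (d+1) => P) 0).symm).integral_comp']
    have hpt : (fun p : ℝ × (Fin d → ℝ) =>
        (∑ r : Fin (d+1) → Fin (ι+1), γ r * ∏ i, (q ((r i : ℕ))).eval
          (((MeasurableEquiv.piFinSuccAbove (fun _ : Fin (d+1) => ℝ) 0).symm p) i)) ^ 4)
        = fun p => (∑ k : Fin (ι+1), (q (k : ℕ)).eval p.1 * g k p.2) ^ 4 := by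
      funext p
      congr 1
      have hsymm : ∀ i, ((MeasurableEquiv.piFinSuccAbove (fun _ : Fin (d+1) => ℝ) 0).symm p) i
          = (Fin.cons p.1 p.2 : Fin (d+1) → ℝ) i := by
        intro i
        simp [MeasurableEquiv.piFinSuccAbove_symm_apply, Fin.insertNthEquiv, Fin.insertNth_zero]
      have hQ : ∀ r : Fin (d+1) → Fin (ι+1),
          (∏ i, (q ((r i : ℕ))).eval (((MeasurableEquiv.piFinSuccAbove
            (fun _ : Fin (d+1) => ℝ) 0).symm p) i))
          = (q ((r 0 : ℕ))).eval p.1 * ∏ j : Fin d, (q ((r j.succ : ℕ))).eval (p.2 j) := by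
        intro r
        rw [Finset.prod_congr rfl fun i (_ : i ∈ Finset.univ) => by rw [hsymm i]]
        rw [Fin.prod_univ_succ]
        simp [Fin.cons_zero, Fin.cons_succ]
      calc ∑ r : Fin (d+1) → Fin (ι+1), γ r * ∏ i, (q ((r i : ℕ))).eval
            (((MeasurableEquiv.piFinSuccAbove (fun _ : Fin (d+1) => ℝ) 0).symm p) i)
          = ∑ r : Fin (d+1) → Fin (ι+1), γ r *
              ((q ((r 0 : ℕ))).eval p.1 * ∏ j : Fin d, (q ((r j.succ : ℕ))).eval (p.2 j)) :=
            Finset.sum_congr rfl fun r _ => by rw [hQ r]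
        _ = ∑ pk : Fin (ι+1) × (Fin d → Fin (ι+1)), γ (Fin.cons pk.1 pk.2) *
              ((q ((pk.1 : ℕ))).eval p.1 * ∏ j : Fin d, (q ((pk.2 j : ℕ))).eval (p.2 j)) := by
            refine (Fintype.sum_equiv (Fin.consEquiv fun _ => Fin (ι+1)) _ _ fun pk => ?_).symm
            simp [Fin.consEquiv, Fin.cons_zero, Fin.cons_succ]
        _ = ∑ k : Fin (ι+1), ∑ r' : Fin d → Fin (ι+1), γ (Fin.cons k r') *
              ((q ((k : ℕ))).eval p.1 * ∏ j : Fin d, (q ((r' j : ℕ))).eval (p.2 j)) :=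
            Fintype.sum_prod_type _
        _ = ∑ k : Fin (ι+1), (q (k : ℕ)).eval p.1 * g k p.2 := by
            refine Finset.sum_congr rfl fun k _ => ?_
            rw [hgdef, gfun, Finset.mul_sum]
            exact Finset.sum_congr rfl fun r' _ => by ring
    rw [hpt]
    have hpow : (fun p : ℝ × (Fin d → ℝ) => (∑ k : Fin (ι+1), (q (k : ℕ)).eval p.1 * g k p.2) ^ 4)
        = fun p => ∑ k1 : Fin (ι+1), ∑ k2 : Fin (ι+1), ∑ k3 : Fin (ι+1), ∑ k4 : Fin (ι+1),
            ((q (k1 : ℕ)).eval p.1 * (q (k2 : ℕ)).eval p.1 *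
              ((q (k3 : ℕ)).eval p.1 * (q (k4 : ℕ)).eval p.1)) *
            (g k1 p.2 * g k2 p.2 * (g k3 p.2 * g k4 p.2)) := by
      funext p
      rw [sum_pow_four]
      exact Finset.sum_congr rfl fun k1 _ => Finset.sum_congr rfl fun k2 _ =>
        Finset.sum_congr rfl fun k3 _ => Finset.sum_congr rfl fun k4 _ => by ring
    rw [hpow]
    have hintq : ∀ k1 k2 k3 k4 : Fin (ι+1), Integrable (fun p : ℝ × (Fin d → ℝ) =>
        ((q (k1 : ℕ)).eval p.1 * (q (k2 : ℕ)).eval p.1 *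
          ((q (k3 : ℕ)).eval p.1 * (q (k4 : ℕ)).eval p.1)) *
        (g k1 p.2 * g k2 p.2 * (g k3 p.2 * g k4 p.2))) (P.prod μd) :=
      fun k1 k2 k3 k4 => (int_q4 P q hmom _ _ _ _).mul_prod (hint4 k1 k2 k3 k4)
    rw [integral_finset_sum _ fun k1 _ => integrable_finset_sum _ fun k2 _ =>
      integrable_finset_sum _ fun k3 _ => integrable_finset_sum _ fun k4 _ => hintq k1 k2 k3 k4]
    simp only [Fintype.sum_prod_type]
    refine Finset.sum_congr rfl fun k1 _ => ?_
    rw [integral_finset_sum _ fun k2 _ => integrable_finset_sum _ fun k3 _ =>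
      integrable_finset_sum _ fun k4 _ => hintq k1 k2 k3 k4]
    refine Finset.sum_congr rfl fun k2 _ => ?_
    rw [integral_finset_sum _ fun k3 _ => integrable_finset_sum _ fun k4 _ => hintq k1 k2 k3 k4]
    refine Finset.sum_congr rfl fun k3 _ => ?_
    rw [integral_finset_sum _ fun k4 _ => hintq k1 k2 k3 k4]
    refine Finset.sum_congr rfl fun k4 _ => ?_
    rw [integral_prod_mul (μ := P) (ν := μd)
      (f := fun z => (q (k1 : ℕ)).eval z * (q (k2 : ℕ)).eval z *
        ((q (k3 : ℕ)).eval z * (q (k4 : ℕ)).eval z))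
      (g := fun y => g k1 y * g k2 y * (g k3 y * g k4 y))]
    rfl
  -- now the final bound
  rw [hexpand]
  set t0 : Fin (ι+1) × Fin (ι+1) × Fin (ι+1) × Fin (ι+1) := (0, 0, 0, 0) with ht0
  set F : Fin (ι+1) × Fin (ι+1) × Fin (ι+1) × Fin (ι+1) → ℝ := fun t =>
    c4 P q t.1 t.2.1 t.2.2.1 t.2.2.2 *
      ∫ y, g t.1 y * g t.2.1 y * (g t.2.2.1 y * g t.2.2.2 y) ∂μd with hF
  have hF0 : F t0 ≤ K ^ (m+1) * (A 0) ^ 2 := by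
    rw [hF, ht0]
    simp only [Fin.val_zero]
    rw [c4_1111 P q hq0, one_mul]
    calc (∫ y, g 0 y * g 0 y * (g 0 y * g 0 y) ∂μd) = ∫ y, (g 0 y) ^ 4 ∂μd := by
          congr 1; funext y; ring
      _ ≤ K ^ (m+1) * (A 0) ^ 2 := hg40
  have hFrest : ∀ t ∈ Finset.univ.erase t0, F t ≤ M * (p' * q') := by
    intro t ht
    obtain ⟨k1, k2, k3, k4⟩ := t
    have hne : (k1, k2, k3, k4) ≠ t0 := (Finset.mem_erase.mp ht).1
    rw [hF]
    simp only [Fin.val_zero]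
    by_cases h1 : k1 = 0 <;> by_cases h2 : k2 = 0 <;> by_cases h3 : k3 = 0 <;> by_cases h4 : k4 = 0
    · exact absurd (by rw [h1, h2, h3, h4, ht0]) hne
    -- k4 only
    · subst h1; subst h2; subst h3
      have hk4 : ((k4 : ℕ)) ≠ 0 := fun h => h4 (by ext; simpa using h)
      simp only [Fin.val_zero]
      rw [(c4_single P q hq0 hqorth hk4).2.2.2, zero_mul]
      exact mul_nonneg hM0 (mul_nonneg hp'0 hq'0)
    · subst h1; subst h2; subst h4
      have hk3 : ((k3 : ℕ)) ≠ 0 := fun h => h3 (by ext; simpa using h)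
      simp only [Fin.val_zero]
      rw [(c4_single P q hq0 hqorth hk3).2.2.1, zero_mul]
      exact mul_nonneg hM0 (mul_nonneg hp'0 hq'0)
    · -- k3, k4 nonzero
      exact hkey k1 k2 k3 k4 (le_trans
        (hmul4 _ _ _ _ _ _ _ _ (hB0 k2) (hB0 k3) (hB0 k4) hp'0 hp'0 hq'0
          (hBp k1) (hBp k2) (hBq k3 h3) (hBq k4 h4))
        (le_of_eq (by ring)))
    · subst h1; subst h3; subst h4
      have hk2 : ((k2 : ℕ)) ≠ 0 := fun h => h2 (by ext; simpa using h)
      simp only [Fin.val_zero]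
      rw [(c4_single P q hq0 hqorth hk2).2.1, zero_mul]
      exact mul_nonneg hM0 (mul_nonneg hp'0 hq'0)
    · -- k2, k4
      exact hkey k1 k2 k3 k4 (le_trans
        (hmul4 _ _ _ _ _ _ _ _ (hB0 k2) (hB0 k3) (hB0 k4) hp'0 hq'0 hp'0
          (hBp k1) (hBq k2 h2) (hBp k3) (hBq k4 h4))
        (le_of_eq (by ring)))
    · -- k2, k3
      exact hkey k1 k2 k3 k4 (le_trans
        (hmul4 _ _ _ _ _ _ _ _ (hB0 k2) (hB0 k3) (hB0 k4) hp'0 hq'0 hq'0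
          (hBp k1) (hBq k2 h2) (hBq k3 h3) (hBp k4))
        (le_of_eq (by ring)))
    · -- k2, k3, k4
      exact hkey k1 k2 k3 k4 (le_trans
        (hmul4 _ _ _ _ _ _ _ _ (hB0 k2) (hB0 k3) (hB0 k4) hp'0 hq'0 hq'0
          (hBp k1) (hBq k2 h2) (hBq k3 h3) (hBp k4))
        (le_of_eq (by ring)))
    · subst h2; subst h3; subst h4
      have hk1 : ((k1 : ℕ)) ≠ 0 := fun h => h1 (by ext; simpa using h)
      simp only [Fin.val_zero]
      rw [(c4_single P q hq0 hqorth hk1).1, zero_mul]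
      exact mul_nonneg hM0 (mul_nonneg hp'0 hq'0)
    · -- k1, k4
      exact hkey k1 k2 k3 k4 (le_trans
        (hmul4 _ _ _ _ _ _ _ _ (hB0 k2) (hB0 k3) (hB0 k4) hq'0 hp'0 hp'0
          (hBq k1 h1) (hBp k2) (hBp k3) (hBq k4 h4))
        (le_of_eq (by ring)))
    · -- k1, k3
      exact hkey k1 k2 k3 k4 (le_trans
        (hmul4 _ _ _ _ _ _ _ _ (hB0 k2) (hB0 k3) (hB0 k4) hq'0 hp'0 hq'0
          (hBq k1 h1) (hBp k2) (hBq k3 h3) (hBp k4))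
        (le_of_eq (by ring)))
    · -- k1, k3, k4
      exact hkey k1 k2 k3 k4 (le_trans
        (hmul4 _ _ _ _ _ _ _ _ (hB0 k2) (hB0 k3) (hB0 k4) hq'0 hp'0 hq'0
          (hBq k1 h1) (hBp k2) (hBq k3 h3) (hBp k4))
        (le_of_eq (by ring)))
    · -- k1, k2
      exact hkey k1 k2 k3 k4 (le_trans
        (hmul4 _ _ _ _ _ _ _ _ (hB0 k2) (hB0 k3) (hB0 k4) hq'0 hq'0 hp'0
          (hBq k1 h1) (hBq k2 h2) (hBp k3) (hBp k4))
        (le_of_eq (by ring)))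
    · -- k1, k2, k4
      exact hkey k1 k2 k3 k4 (le_trans
        (hmul4 _ _ _ _ _ _ _ _ (hB0 k2) (hB0 k3) (hB0 k4) hq'0 hq'0 hp'0
          (hBq k1 h1) (hBq k2 h2) (hBp k3) (hBp k4))
        (le_of_eq (by ring)))
    · -- k1, k2, k3
      exact hkey k1 k2 k3 k4 (le_trans
        (hmul4 _ _ _ _ _ _ _ _ (hB0 k2) (hB0 k3) (hB0 k4) hq'0 hq'0 hp'0
          (hBq k1 h1) (hBq k2 h2) (hBp k3) (hBp k4))
        (le_of_eq (by ring)))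
    · -- all nonzero
      exact hkey k1 k2 k3 k4 (le_trans
        (hmul4 _ _ _ _ _ _ _ _ (hB0 k2) (hB0 k3) (hB0 k4) hq'0 hq'0 hp'0
          (hBq k1 h1) (hBq k2 h2) (hBp k3) (hBp k4))
        (le_of_eq (by ring)))
  have hcard : ((Finset.univ.erase t0).card : ℝ) ≤ ((ι:ℝ)+1) ^ 4 := by
    have h1 : (Finset.univ.erase t0).card ≤ Fintype.card (Fin (ι+1) × Fin (ι+1) × Fin (ι+1) × Fin (ι+1)) := by
      rw [← Finset.card_univ]
      exact Finset.card_le_card (Finset.erase_subset _ _)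
    have h2 : Fintype.card (Fin (ι+1) × Fin (ι+1) × Fin (ι+1) × Fin (ι+1)) = (ι+1)^4 := by
      simp [Fintype.card_prod, Fintype.card_fin]; ring
    calc ((Finset.univ.erase t0).card : ℝ) ≤ ((ι+1 : ℕ) ^ 4 : ℕ) := by exact_mod_cast h2 ▸ h1
      _ = ((ι:ℝ)+1) ^ 4 := by push_cast; ring
  have hsum_rest : ∑ t ∈ Finset.univ.erase t0, F t ≤ ((ι:ℝ)+1)^4 * (M * (p' * q')) := by
    calc ∑ t ∈ Finset.univ.erase t0, F t ≤ ∑ _t ∈ Finset.univ.erase t0, M * (p' * q') :=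
          Finset.sum_le_sum hFrest
      _ = ((Finset.univ.erase t0).card : ℝ) * (M * (p' * q')) := by
          rw [Finset.sum_const, nsmul_eq_mul]
      _ ≤ ((ι:ℝ)+1)^4 * (M * (p' * q')) :=
          mul_le_mul_of_nonneg_right hcard (mul_nonneg hM0 (mul_nonneg hp'0 hq'0))
  have hcross : ((ι:ℝ)+1)^4 * (M * (p' * q')) ≤ K ^ (m+1) * (S * b) := by
    have hX0 : (0:ℝ) ≤ ((ι:ℝ)+1)^4 * M := mul_nonneg (by positivity) hM0
    have hsqK : (((ι:ℝ)+1)^4 * M) * (Real.sqrt (K ^ (m+1)) * Real.sqrt (K ^ m)) ≤ K ^ (m+1) := by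
      rw [← Real.sqrt_mul (le_of_lt (pow_pos hKpos _)), ← pow_add]
      have hXX : (((ι:ℝ)+1)^4 * M) = Real.sqrt ((((ι:ℝ)+1)^4 * M)^2) :=
        (Real.sqrt_sq hX0).symm
      rw [hXX, ← Real.sqrt_mul (sq_nonneg _)]
      have harg : (((ι:ℝ)+1)^4 * M)^2 * K ^ (m + 1 + m) ≤ K ^ (2*(m+1)) := by
        have e1 : (((ι:ℝ)+1)^4 * M)^2 = ((ι:ℝ)+1)^8 * M^2 := by ring
        have e2 : K ^ (2*(m+1)) = K * K ^ (m+1+m) := by rw [← pow_succ']; ring_nf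
        rw [e1, e2]
        exact mul_le_mul_of_nonneg_right hK (le_of_lt (pow_pos hKpos _))
      calc Real.sqrt ((((ι:ℝ)+1)^4 * M)^2 * K ^ (m + 1 + m)) ≤ Real.sqrt (K ^ (2*(m+1))) :=
            Real.sqrt_le_sqrt harg
        _ = K ^ (m+1) := by
            rw [show 2*(m+1) = (m+1)*2 from by ring, pow_mul, Real.sqrt_sq (le_of_lt (pow_pos hKpos _))]
    calc ((ι:ℝ)+1)^4 * (M * (p' * q'))
        = ((((ι:ℝ)+1)^4 * M) * (Real.sqrt (K ^ (m+1)) * Real.sqrt (K ^ m))) * (S * b) := by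
          rw [hp', hq']; ring
      _ ≤ K ^ (m+1) * (S * b) :=
          mul_le_mul_of_nonneg_right hsqK (mul_nonneg hS0 hb0)
  calc ∑ t : Fin (ι+1) × Fin (ι+1) × Fin (ι+1) × Fin (ι+1), F t
      = F t0 + ∑ t ∈ Finset.univ.erase t0, F t :=
        (Finset.add_sum_erase _ _ (Finset.mem_univ t0)).symm
    _ ≤ K ^ (m+1) * (A 0) ^ 2 + ((ι:ℝ)+1)^4 * (M * (p' * q')) := add_le_add hF0 hsum_rest
    _ ≤ K ^ (m+1) * (A 0) ^ 2 + K ^ (m+1) * (S * b) := (add_le_add_iff_left _).mpr hcross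
    _ ≤ K ^ (m+1) * S ^ 2 := by
        have hfinal : (A 0) ^ 2 + S * b ≤ S ^ 2 := by
          nlinarith [hA0 0, hb0, hbS, mul_nonneg (hA0 0) hb0]
        have := mul_le_mul_of_nonneg_left hfinal (le_of_lt (pow_pos hKpos (m+1)))
        nlinarith [this]

lemma main_bound
    (hmom : ∀ m : ℕ, Integrable (fun z => z ^ m) P)
    (hq0 : q 0 = 1)
    (hqorth : ∀ j k, (∫ z, (q j).eval z * (q k).eval z ∂P) = if j = k then 1 else 0)
    (ι : ℕ) :
    ∃ K : ℝ, 1 ≤ K ∧ ∀ (m d : ℕ) (γ : (Fin d → Fin (ι+1)) → ℝ),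
      (∀ r, γ r ≠ 0 → ∑ i, (r i : ℕ) ≤ m) →
      (∫ x : Fin d → ℝ, (∑ r, γ r * ∏ i, (q ((r i : ℕ))).eval (x i)) ^ 4
        ∂(Measure.pi fun _ => P)) ≤ K ^ m * (∑ r, γ r ^ 2) ^ 2 := by
  classical
  set M : ℝ := 1 + ∑ k1 : Fin (ι+1), ∑ k2 : Fin (ι+1), ∑ k3 : Fin (ι+1), ∑ k4 : Fin (ι+1),
    |c4 P q k1 k2 k3 k4| with hMdef
  have habs0 : ∀ k1 k2 : Fin (ι+1), (0:ℝ) ≤ ∑ k3 : Fin (ι+1), ∑ k4 : Fin (ι+1),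
      |c4 P q k1 k2 k3 k4| :=
    fun k1 k2 => Finset.sum_nonneg fun k3 _ => Finset.sum_nonneg fun k4 _ => abs_nonneg _
  have hM1 : 1 ≤ M := by
    rw [hMdef]
    have : (0:ℝ) ≤ ∑ k1 : Fin (ι+1), ∑ k2 : Fin (ι+1), ∑ k3 : Fin (ι+1), ∑ k4 : Fin (ι+1),
        |c4 P q k1 k2 k3 k4| :=
      Finset.sum_nonneg fun k1 _ => Finset.sum_nonneg fun k2 _ => habs0 k1 k2
    linarith
  have gen : ∀ (f : Fin (ι+1) → ℝ), (∀ k, 0 ≤ f k) → ∀ k, f k ≤ ∑ k', f k' :=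
    fun f hf k => Finset.single_le_sum (fun k' _ => hf k') (Finset.mem_univ k)
  have hM : ∀ k1 k2 k3 k4 : Fin (ι+1), |c4 P q k1 k2 k3 k4| ≤ M := by
    intro k1 k2 k3 k4
    have h4 := gen (fun k4' => |c4 P q k1 k2 k3 k4'|) (fun _ => abs_nonneg _) k4
    have h3 := gen (fun k3' => ∑ k4' : Fin (ι+1), |c4 P q k1 k2 k3' k4'|)
      (fun k3' => Finset.sum_nonneg fun _ _ => abs_nonneg _) k3
    have h2 := gen (fun k2' => ∑ k3' : Fin (ι+1), ∑ k4' : Fin (ι+1), |c4 P q k1 k2' k3' k4'|)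
      (fun k2' => habs0 k1 k2') k2
    have h1 := gen (fun k1' => ∑ k2' : Fin (ι+1), ∑ k3' : Fin (ι+1), ∑ k4' : Fin (ι+1),
        |c4 P q k1' k2' k3' k4'|)
      (fun k1' => Finset.sum_nonneg fun k2' _ => habs0 k1' k2') k1
    rw [hMdef]; linarith
  set K : ℝ := ((ι:ℝ)+1)^8 * M^2 + 1 with hKdef
  have hK : ((ι:ℝ)+1)^8 * M^2 ≤ K := by rw [hKdef]; linarith
  have hK1 : 1 ≤ K := by
    rw [hKdef]
    have : (0:ℝ) ≤ ((ι:ℝ)+1)^8 * M^2 := by positivity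
    linarith
  refine ⟨K, hK1, ?_⟩
  intro m
  induction m with
  | zero =>
    intro d γ hγ
    have hz : ∀ r : Fin d → Fin (ι+1), r ≠ (fun _ => 0) → γ r = 0 := by
      intro r hr
      by_contra hne
      have h1 := hγ r hne
      have h2 : ∀ i, (r i : ℕ) = 0 := by
        intro i
        have := Finset.sum_eq_zero_iff.mp (Nat.le_zero.mp h1) i (Finset.mem_univ i)
        exact this
      exact hr (funext fun i => by ext; simpa using h2 i)
    have hf : ∀ x : Fin d → ℝ, (∑ r, γ r * ∏ i, (q ((r i : ℕ))).eval (x i))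
        = γ (fun _ => 0) := by
      intro x
      rw [Finset.sum_eq_single (fun _ => (0 : Fin (ι+1)))]
      · simp [hq0]
      · intro r _ hr; rw [hz r hr, zero_mul]
      · intro h; exact absurd (Finset.mem_univ _) h
    have hfi : (fun x : Fin d → ℝ => (∑ r, γ r * ∏ i, (q ((r i : ℕ))).eval (x i)) ^ 4)
        = fun _ => γ (fun _ => 0) ^ 4 := by
      funext x; rw [hf x]
    rw [hfi, integral_const]
    simp only [measure_univ, probReal_univ, ENNReal.toReal_one, smul_eq_mul, one_mul, pow_zero]
    have h1 : γ (fun _ => 0) ^ 2 ≤ ∑ r, γ r ^ 2 :=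
      Finset.single_le_sum (fun r _ => sq_nonneg (γ r)) (Finset.mem_univ _)
    nlinarith [h1, sq_nonneg (γ (fun _ => 0))]
  | succ m ihm =>
    intro d
    induction d with
    | zero =>
      intro γ hγ
      have huniv : (Finset.univ : Finset (Fin 0 → Fin (ι+1))) = {fun i => i.elim0} := by
        apply Finset.eq_singleton_iff_unique_mem.mpr
        exact ⟨Finset.mem_univ _, fun r _ => funext fun i => i.elim0⟩
      have hconst : ∀ x : Fin 0 → ℝ, (∑ r, γ r * ∏ i, (q ((r i : ℕ))).eval (x i))
          = γ (fun i => i.elim0) := by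
        intro x
        rw [huniv, Finset.sum_singleton]
        simp
      have hfi : (fun x : Fin 0 → ℝ => (∑ r, γ r * ∏ i, (q ((r i : ℕ))).eval (x i)) ^ 4)
          = fun _ => γ (fun i => i.elim0) ^ 4 := by
        funext x; rw [hconst x]
      rw [hfi, integral_const]
      simp only [measure_univ, probReal_univ, ENNReal.toReal_one, smul_eq_mul, one_mul]
      rw [huniv, Finset.sum_singleton]
      have h0 : (0:ℝ) ≤ γ (fun i => i.elim0) ^ 4 := by positivity
      calc γ (fun i => i.elim0) ^ 4 = 1 * ((γ (fun i => i.elim0) ^ 2) ^ 2) := by ring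
        _ ≤ K ^ (m+1) * ((γ (fun i => i.elim0) ^ 2) ^ 2) := by
            have : (1:ℝ) ≤ K ^ (m+1) := one_le_pow₀ hK1
            have h2 : (0:ℝ) ≤ (γ (fun i => i.elim0) ^ 2) ^ 2 := by positivity
            nlinarith
    | succ d ihd =>
      intro γ hγ
      exact step_bound P q hmom hq0 hqorth hM hM1 hK hK1
        (fun γ' h => ihm d γ' h) (fun γ' h => ihd γ' h) γ hγ

theorem statement_15'
    (hmom : ∀ m : ℕ, Integrable (fun z => z ^ m) P)
    (hsupp : ∀ S : Finset ℝ, P (S : Set ℝ) < 1)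
    (hq0 : q 0 = 1)
    (hqdeg : ∀ k, (q k).natDegree = k)
    (hqlead : ∀ k, 0 < (q k).leadingCoeff)
    (hqorth : ∀ j k, (∫ z, (q j).eval z * (q k).eval z ∂P) = if j = k then 1 else 0)
    (ι : ℕ) (hι : 1 ≤ ι) :
    ∃ C > 0, ∀ (d : ℕ), 0 < d → ∀ γ : MIdx d ι → ℝ,
      (∫ x : Fin d → ℝ,
          (∑ r : MIdx d ι, γ r * ∏ i, (q (r.1 i : ℕ)).eval (x i)) ^ 4
          ∂(Measure.pi fun _ : Fin d => P)) ≤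
        C * (∑ r : MIdx d ι, γ r ^ 2) ^ 2 ∧
      (∫ x : Fin d → ℝ,
          (∑ r : MIdx d ι, γ r * ∏ i, (q (r.1 i : ℕ)).eval (x i)) ^ 2
          ∂(Measure.pi fun _ : Fin d => P)) =
        ∑ r : MIdx d ι, γ r ^ 2 := by
  classical
  obtain ⟨K, hK1, hKbound⟩ := main_bound P q hmom hq0 hqorth ι
  refine ⟨K ^ ι, pow_pos (lt_of_lt_of_le one_pos hK1) ι, ?_⟩
  intro d _hd γ
  set p : (Fin d → Fin (ι+1)) → Prop := fun r => ∑ i, (r i : ℕ) ≤ ι with hp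
  set gam : (Fin d → Fin (ι+1)) → ℝ := fun r => if h : p r then γ ⟨r, h⟩ else 0 with hgam
  have hgampos : ∀ r : MIdx d ι, gam r.1 = γ r := by
    intro r
    rw [hgam]; simp only; rw [dif_pos r.2]
  have key : ∀ w : (Fin d → Fin (ι+1)) → ℝ,
      (∑ r : MIdx d ι, γ r * w r.1) = ∑ r : Fin d → Fin (ι+1), gam r * w r := by
    intro w
    calc (∑ r : MIdx d ι, γ r * w r.1) = ∑ r : MIdx d ι, gam r.1 * w r.1 :=
          Finset.sum_congr rfl fun r _ => by rw [hgampos r]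
      _ = ∑ r ∈ Finset.univ.filter p, gam r * w r :=
          (Finset.sum_subtype (Finset.univ.filter p) (fun x => by simp [hp]) (fun r => gam r * w r)).symm
      _ = ∑ r : Fin d → Fin (ι+1), gam r * w r := by
          rw [← Finset.sum_filter_add_sum_filter_not Finset.univ p (fun r => gam r * w r)]
          have h2 : (∑ r ∈ Finset.univ.filter (fun r => ¬ p r), gam r * w r) = 0 :=
            Finset.sum_eq_zero fun r hr => by
              rw [hgam]; simp only; rw [dif_neg (Finset.mem_filter.mp hr).2, zero_mul]
          rw [h2, add_zero]
  have keysq : (∑ r : MIdx d ι, γ r ^ 2) = ∑ r : Fin d → Fin (ι+1), gam r ^ 2 := by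
    calc (∑ r : MIdx d ι, γ r ^ 2) = ∑ r : MIdx d ι, gam r.1 ^ 2 :=
          Finset.sum_congr rfl fun r _ => by rw [hgampos r]
      _ = ∑ r ∈ Finset.univ.filter p, gam r ^ 2 :=
          (Finset.sum_subtype (Finset.univ.filter p) (fun x => by simp [hp]) (fun r => gam r ^ 2)).symm
      _ = ∑ r : Fin d → Fin (ι+1), gam r ^ 2 := by
          rw [← Finset.sum_filter_add_sum_filter_not Finset.univ p (fun r => gam r ^ 2)]
          have h2 : (∑ r ∈ Finset.univ.filter (fun r => ¬ p r), gam r ^ 2) = 0 :=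
            Finset.sum_eq_zero fun r hr => by
              rw [hgam]; simp only; rw [dif_neg (Finset.mem_filter.mp hr).2]; ring
          rw [h2, add_zero]
  have hintgr : ∀ x : Fin d → ℝ,
      (∑ r : MIdx d ι, γ r * ∏ i, (q (r.1 i : ℕ)).eval (x i))
        = ∑ r : Fin d → Fin (ι+1), gam r * ∏ i, (q ((r i : ℕ))).eval (x i) :=
    fun x => key (fun r => ∏ i, (q ((r i : ℕ))).eval (x i))
  constructor
  · have h4 : (fun x : Fin d → ℝ =>
        (∑ r : MIdx d ι, γ r * ∏ i, (q (r.1 i : ℕ)).eval (x i)) ^ 4)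
        = fun x => (∑ r : Fin d → Fin (ι+1), gam r * ∏ i, (q ((r i : ℕ))).eval (x i)) ^ 4 := by
      funext x; rw [hintgr x]
    rw [h4, keysq]
    refine hKbound ι d gam ?_
    intro r hr
    by_contra hno
    exact hr (by rw [hgam]; simp only; rw [dif_neg hno])
  · have h2 : (fun x : Fin d → ℝ =>
        (∑ r : MIdx d ι, γ r * ∏ i, (q (r.1 i : ℕ)).eval (x i)) ^ 2)
        = fun x => (∑ r : Fin d → Fin (ι+1), gam r * ∏ i, (q ((r i : ℕ))).eval (x i)) ^ 2 := by
      funext x; rw [hintgr x]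
    rw [h2, keysq]
    exact L2_iden P q hqorth (fun (r : Fin d → Fin (ι+1)) (i : Fin d) => (r i : ℕ))
      (fun r s hrs => funext fun i => by
        have := congrFun hrs i
        exact Fin.val_injective this)
      hmom gam


end Aux

/-- hypercontractivity / L⁴–L² equivalence for low-degree parts of the
weakly-correlated orthonormal polynomial basis. There is a constant `C` depending only on
`ι` and `P` such that for every dimension `d` and all coefficients `γ`, the function
`f_γ = Σ_{|r| ≤ ι} γ_r q_r` satisfies `E f_γ⁴ ≤ C (E f_γ²)² = C (Σ γ_r²)²`. -/


theorem statement_15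
    (P : Measure ℝ) [IsProbabilityMeasure P]
    (hmom : ∀ m : ℕ, Integrable (fun z => z ^ m) P)
    (hsupp : ∀ S : Finset ℝ, P (S : Set ℝ) < 1)
    (q : ℕ → Polynomial ℝ)
    (hq0 : q 0 = 1)
    (hqdeg : ∀ k, (q k).natDegree = k)
    (hqlead : ∀ k, 0 < (q k).leadingCoeff)
    (hqorth : ∀ j k, (∫ z, (q j).eval z * (q k).eval z ∂P) = if j = k then 1 else 0)
    (ι : ℕ) (hι : 1 ≤ ι) :
    ∃ C > 0, ∀ (d : ℕ), 0 < d → ∀ γ : MIdx d ι → ℝ,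
      (∫ x : Fin d → ℝ,
          (∑ r : MIdx d ι, γ r * ∏ i, (q (r.1 i : ℕ)).eval (x i)) ^ 4
          ∂(Measure.pi fun _ : Fin d => P)) ≤
        C * (∑ r : MIdx d ι, γ r ^ 2) ^ 2 ∧
      (∫ x : Fin d → ℝ,
          (∑ r : MIdx d ι, γ r * ∏ i, (q (r.1 i : ℕ)).eval (x i)) ^ 2
          ∂(Measure.pi fun _ : Fin d => P)) =
        ∑ r : MIdx d ι, γ r ^ 2 := by
  exact statement_15' P q hmom hsupp hq0 hqdeg hqlead hqorth ι hι
end
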